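/- arXiv:1904.11072 — 6 statements merged into one kernel-verified Lean document; each statement's English description precedes it below -/
import Mathlib

section
/- Let (X,G,Φ) be a Cantor action, let {U_ℓ} be an adapted neighborhood basis at x ∈ X and {U'_ℓ} an adapted neighborhood basis at y ∈ X, with stabilizer chains K_ℓ := {f ∈ G(Φ) : f(z) = z for all z ∈ U_ℓ} and K'_ℓ := {f ∈ G(Φ) : f(z) = z for all z ∈ U'_ℓ}. Then {K_ℓ} is eventually constant (there is ℓ₀ with K_ℓ = K_{ℓ₀} for all ℓ ≥ ℓ₀) if and only if {K'_ℓ} is eventually constant. In particular, whether the action is stable or wild does not depend on the choice of basepoint or adapted neighborhood basis. -/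
open Set Topology Filter

section CantorActionDefs

variable {X : Type*} [MetricSpace X] {G : Type*} [Group G]

/-- `Φ : G → Homeo(X)` is a group homomorphism, i.e. an action of `G` on `X` by
homeomorphisms. -/
def IsActionHom (Φ : G → X ≃ₜ X) : Prop :=
  (∀ x : X, Φ 1 x = x) ∧ ∀ g h : G, ∀ x : X, Φ (g * h) x = Φ g (Φ h x)

/-- The action is minimal: every orbit is dense. -/
def IsMinimalAction (Φ : G → X ≃ₜ X) : Prop :=
  ∀ x : X, Dense (Set.range fun g : G => Φ g x)

/-- The family `{Φ g : g ∈ G}` is equicontinuous with respect to the metric on `X`. -/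
def IsEquicontinuousAction (Φ : G → X ≃ₜ X) : Prop :=
  ∀ ε : ℝ, 0 < ε → ∃ δ : ℝ, 0 < δ ∧
    ∀ g : G, ∀ x y : X, dist x y < δ → dist (Φ g x) (Φ g y) < ε

/-- A Cantor action: a minimal equicontinuous action by homeomorphisms. -/
def IsCantorAction (Φ : G → X ≃ₜ X) : Prop :=
  IsActionHom Φ ∧ IsMinimalAction Φ ∧ IsEquicontinuousAction Φ

/-- A clopen subset adapted to the action: nonempty, clopen, and any translate meeting it
equals it. -/
def IsAdapted (Φ : G → X ≃ₜ X) (U : Set X) : Prop :=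
  U.Nonempty ∧ IsClopen U ∧ ∀ g : G, (Φ g '' U ∩ U).Nonempty → Φ g '' U = U

/-- The Ellis (closure) group `G(Φ)`: the closure of `{Φ g : g ∈ G}` in `C(X,X)` with the
compact-open topology. -/
def actionClosure (Φ : G → X ≃ₜ X) : Set C(X, X) :=
  closure (Set.range fun g : G => (Φ g : C(X, X)))

/-- An adapted neighborhood basis at `x`: a properly descending chain of adapted clopen
sets starting at `X`, containing `x`, with intersection `{x}`. -/
def IsAdaptedBasis (Φ : G → X ≃ₜ X) (x : X) (U : ℕ → Set X) : Prop :=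
  U 0 = Set.univ ∧ (∀ ℓ : ℕ, IsAdapted Φ (U ℓ)) ∧ (∀ ℓ : ℕ, x ∈ U ℓ) ∧
    (∀ ℓ : ℕ, U (ℓ + 1) ⊂ U ℓ) ∧ (⋂ ℓ : ℕ, U ℓ) = ({x} : Set X)

/-- The stabilizer chain `K_ℓ`: elements of the Ellis group fixing `U ℓ` pointwise. -/
def stabChain (Φ : G → X ≃ₜ X) (U : ℕ → Set X) (ℓ : ℕ) : Set C(X, X) :=
  {f ∈ actionClosure Φ | ∀ z ∈ U ℓ, f z = z}

/-- The stabilizer chain is eventually constant (the action is stable along `U`). -/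
def IsStableChain (Φ : G → X ≃ₜ X) (U : ℕ → Set X) : Prop :=
  ∃ ℓ₀ : ℕ, ∀ ℓ : ℕ, ℓ₀ ≤ ℓ → stabChain Φ U ℓ = stabChain Φ U ℓ₀

/-- The action of the Ellis group is locally completely quasi-analytic. -/
def IsLCQA (Φ : G → X ≃ₜ X) : Prop :=
  ∃ ε : ℝ, 0 < ε ∧ ∀ U : Set X, IsAdapted Φ U → Metric.diam U < ε →
    ∀ V : Set X, IsAdapted Φ V → V ⊆ U →
      ∀ f₁ ∈ actionClosure Φ, ∀ f₂ ∈ actionClosure Φ,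
        (∀ z ∈ V, f₁ z = f₂ z) → ∀ z ∈ U, f₁ z = f₂ z

/-- `f` is a non-Hausdorff element of the Ellis group at `x`. -/
def IsNonHausdorffElem (Φ : G → X ≃ₜ X) (f : C(X, X)) (x : X) : Prop :=
  f ∈ actionClosure Φ ∧ f x = x ∧
    (∀ W : Set X, IsClopen W → x ∈ W → ¬ ∀ z ∈ W, f z = z) ∧
    ∃ (xs : ℕ → X) (W : ℕ → Set X), Filter.Tendsto xs Filter.atTop (nhds x) ∧
      ∀ i : ℕ, xs i ∈ W i ∧ IsClopen (W i) ∧ ⇑f '' W i = W i ∧ ∀ z ∈ W i, f z = z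

/-- The restrictions to an invariant set `U` of the maps `Φ g` with `Φ g (U) = U`,
as elements of `C(U,U)`. -/
def restrictedMaps (Φ : G → X ≃ₜ X) (U : Set X) : Set C(U, U) :=
  {u : C(U, U) | ∃ g : G, Φ g '' U = U ∧ ∀ z : U, (u z : X) = Φ g (z : X)}

/-- The stabilizer subgroup `G_U = {g : G | Φ g (U) = U}` of a set `U`. -/
def setStabilizer (Φ : G → X ≃ₜ X) (hΦ : IsActionHom Φ) (U : Set X) : Subgroup G where
  carrier := {g : G | Φ g '' U = U}
  one_mem' := by
    show ⇑(Φ 1) '' U = U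
    have h : ⇑(Φ 1) = id := funext hΦ.1
    rw [h, Set.image_id]
  mul_mem' := by
    intro a b ha hb
    show ⇑(Φ (a * b)) '' U = U
    have h : ⇑(Φ (a * b)) = ⇑(Φ a) ∘ ⇑(Φ b) := funext fun z => hΦ.2 a b z
    rw [h, Set.image_comp]
    rw [show ⇑(Φ b) '' U = U from hb, show ⇑(Φ a) '' U = U from ha]
  inv_mem' := by
    intro a ha
    show ⇑(Φ a⁻¹) '' U = U
    have hcomp : ⇑(Φ a⁻¹) ∘ ⇑(Φ a) = id := funext fun z => by
      show Φ a⁻¹ (Φ a z) = z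
      have h2 := hΦ.2 a⁻¹ a z
      rw [inv_mul_cancel] at h2
      rw [← h2]
      exact hΦ.1 z
    calc ⇑(Φ a⁻¹) '' U = ⇑(Φ a⁻¹) '' (⇑(Φ a) '' U) := by
            rw [show ⇑(Φ a) '' U = U from ha]
      _ = (⇑(Φ a⁻¹) ∘ ⇑(Φ a)) '' U := (Set.image_comp _ _ _).symm
      _ = U := by rw [hcomp, Set.image_id]

end CantorActionDefs

section ChainDefs

variable {G : Type*} [Group G]

/-- A group chain in `G`: descending subgroups starting at `G`, each of finite index in
the previous one. -/
def IsGroupChain (K : ℕ → Subgroup G) : Prop :=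
  K 0 = ⊤ ∧ ∀ ℓ : ℕ, K (ℓ + 1) ≤ K ℓ ∧ (K (ℓ + 1)).relIndex (K ℓ) ≠ 0

/-- The inverse limit `lim← G ⧸ C ℓ` of the coset spaces along a chain, as a subset of
the product. -/
def chainLimitSet (C : ℕ → Subgroup G) : Set (∀ ℓ : ℕ, G ⧸ C ℓ) :=
  {σ | ∀ ℓ : ℕ, ∃ g : G, σ ℓ = (g : G ⧸ C ℓ) ∧ σ (ℓ + 1) = (g : G ⧸ C (ℓ + 1))}

/-- The inverse limit topology on `lim← G ⧸ C ℓ`: the subspace topology from the product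
of the discrete coset spaces. -/
def chainLimitTop (C : ℕ → Subgroup G) : TopologicalSpace (chainLimitSet C) :=
  TopologicalSpace.induced Subtype.val
    (@Pi.topologicalSpace ℕ (fun ℓ => G ⧸ C ℓ) fun _ => ⊥)

/-- The basepoint `(e C_ℓ)_ℓ` of the inverse limit. -/
def chainBasepoint (C : ℕ → Subgroup G) : chainLimitSet C :=
  ⟨fun ℓ => ((1 : G) : G ⧸ C ℓ), fun _ => ⟨1, rfl, rfl⟩⟩

theorem smul_mem_chainLimitSet {C : ℕ → Subgroup G} (g : G) {σ : ∀ ℓ : ℕ, G ⧸ C ℓ}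
    (hσ : σ ∈ chainLimitSet C) : (fun ℓ => g • σ ℓ) ∈ chainLimitSet C := by
  intro ℓ
  obtain ⟨k, h1, h2⟩ := hσ ℓ
  refine ⟨g * k, ?_, ?_⟩
  · show g • σ ℓ = _
    rw [h1]; rfl
  · show g • σ (ℓ + 1) = _
    rw [h2]; rfl

/-- The conjugate subgroup `g H g⁻¹`. -/
def conjSubgroup (g : G) (H : Subgroup G) : Subgroup G :=
  H.map (MulAut.conj g).toMonoidHom

/-- Equivalence of group chains (interlacing). -/
def ChainsEquivalent (Gc Hc : ℕ → Subgroup G) : Prop :=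
  ∃ K : ℕ → Subgroup G, IsGroupChain K ∧
    ∃ ls js : ℕ → ℕ, StrictMono ls ∧ StrictMono js ∧
      ∀ k : ℕ, K (2 * k) = Gc (ls k) ∧ K (2 * k + 1) = Hc (js k)

/-- Conjugate equivalence of group chains. -/
def ChainsConjugateEquivalent (Gc Hc : ℕ → Subgroup G) : Prop :=
  ∃ gs : ℕ → G, (∀ ℓ : ℕ, (gs ℓ)⁻¹ * gs (ℓ + 1) ∈ Gc ℓ) ∧
    ChainsEquivalent (fun ℓ => conjSubgroup (gs ℓ) (Gc ℓ)) Hc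

end ChainDefs

section TwoSpaces

variable {X : Type*} [MetricSpace X] {X' : Type*} [MetricSpace X']
variable {G : Type*} [Group G] {G' : Type*} [Group G']

/-- A continuous orbit equivalence between two actions, implemented by a homeomorphism
`h : X → X'` with locally constant orbit transfer functions. -/
def IsContinuousOrbitEquivalence (Φ : G → X ≃ₜ X) (Ψ : G' → X' ≃ₜ X') (h : X ≃ₜ X') :
    Prop :=
  (∀ (x : X) (g : G), ∃ (k : G') (O : Set X), IsOpen O ∧ x ∈ O ∧
      ∀ z ∈ O, Ψ k (h z) = h (Φ g z)) ∧
    ∀ (y : X') (k : G'), ∃ (g : G) (O : Set X'), IsOpen O ∧ y ∈ O ∧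
      ∀ w ∈ O, Φ g (h.symm w) = h.symm (Ψ k w)

end TwoSpaces

section Aux
variable {X : Type*} [MetricSpace X] [CompactSpace X] {G : Type*} [Group G]
variable {Φ : G → X ≃ₜ X}

/-- The basis-free fixing property at a point. -/
def FixProp (Φ : G → X ≃ₜ X) (x : X) : Prop :=
  ∃ W : Set X, IsAdapted Φ W ∧ x ∈ W ∧
    ∀ f ∈ actionClosure Φ,
      (∃ M : Set X, IsOpen M ∧ x ∈ M ∧ ∀ z ∈ M, f z = z) → ∀ z ∈ W, f z = z

lemma inv_apply_apply (hΦ : IsActionHom Φ) (g : G) (z : X) : Φ g⁻¹ (Φ g z) = z := by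
  have := hΦ.2 g⁻¹ g z
  rw [inv_mul_cancel] at this
  rw [← this, hΦ.1]

lemma apply_inv_apply (hΦ : IsActionHom Φ) (g : G) (z : X) : Φ g (Φ g⁻¹ z) = z := by
  have := hΦ.2 g g⁻¹ z
  rw [mul_inv_cancel] at this
  rw [← this, hΦ.1]

lemma image_image (hΦ : IsActionHom Φ) (g h : G) (W : Set X) :
    Φ g '' (Φ h '' W) = Φ (g * h) '' W := by
  rw [← Set.image_comp]
  apply Set.image_congr'
  intro z; exact (hΦ.2 g h z).symm

lemma inv_image_image (hΦ : IsActionHom Φ) (g : G) (W : Set X) :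
    Φ g⁻¹ '' (Φ g '' W) = W := by
  rw [image_image hΦ, inv_mul_cancel]
  have : ⇑(Φ 1) = id := funext hΦ.1
  rw [this, Set.image_id]

lemma exists_basis_subset {U : ℕ → Set X} {x : X} (hanti : Antitone U)
    (hcl : ∀ ℓ, IsClosed (U ℓ)) (hint : (⋂ ℓ : ℕ, U ℓ) = ({x} : Set X))
    {M : Set X} (hM : IsOpen M) (hxM : x ∈ M) : ∃ ℓ, U ℓ ⊆ M := by
  have hcpt : IsCompact (Set.univ : Set X) := isCompact_univ
  have hC : ∀ ℓ, IsClosed (U ℓ \ M) := fun ℓ => (hcl ℓ).sdiff hM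
  have hemp : (Set.univ : Set X) ∩ ⋂ ℓ, (U ℓ \ M) = ∅ := by
    apply Set.eq_empty_iff_forall_notMem.mpr
    intro z hz
    have h1 : ∀ ℓ, z ∈ U ℓ \ M := by simpa using hz.2
    have h2 : z ∈ ⋂ ℓ, U ℓ := Set.mem_iInter.mpr fun ℓ => (h1 ℓ).1
    rw [hint, Set.mem_singleton_iff] at h2
    subst h2
    exact (h1 0).2 hxM
  obtain ⟨t, ht⟩ := hcpt.elim_finite_subfamily_closed _ hC hemp
  refine ⟨t.sup id, fun z hz => ?_⟩
  by_contra hzM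
  have hzt : z ∈ (Set.univ : Set X) ∩ ⋂ i ∈ t, (U i \ M) := by
    refine ⟨trivial, ?_⟩
    simp only [Set.mem_iInter]
    intro i hi
    exact ⟨hanti (Finset.le_sup (f := id) hi) hz, hzM⟩
  rw [ht] at hzt
  exact hzt

lemma stabChain_mono {U : ℕ → Set X} (hanti : Antitone U) {ℓ ℓ' : ℕ} (h : ℓ ≤ ℓ') :
    stabChain Φ U ℓ ⊆ stabChain Φ U ℓ' :=
  fun f hf => ⟨hf.1, fun z hz => hf.2 z (hanti h hz)⟩

lemma basis_antitone {U : ℕ → Set X} {x : X} (hU : IsAdaptedBasis Φ x U) : Antitone U :=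
  antitone_nat_of_succ_le fun n => (hU.2.2.2.1 n).subset

lemma lemA {U : ℕ → Set X} {x : X} (hU : IsAdaptedBasis Φ x U)
    (hs : IsStableChain Φ U) : FixProp Φ x := by
  obtain ⟨ℓ₀, hℓ₀⟩ := hs
  refine ⟨U ℓ₀, hU.2.1 ℓ₀, hU.2.2.1 ℓ₀, ?_⟩
  rintro f hf ⟨M, hM, hxM, hfix⟩
  obtain ⟨ℓ₁, hℓ₁⟩ := exists_basis_subset (basis_antitone hU)
    (fun ℓ => ((hU.2.1 ℓ).2.1).1) hU.2.2.2.2 hM hxM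
  have hmem : f ∈ stabChain Φ U (max ℓ₀ ℓ₁) := by
    refine ⟨hf, fun z hz => hfix z (hℓ₁ (basis_antitone hU (le_max_right _ _) hz))⟩
  rw [hℓ₀ _ (le_max_left _ _)] at hmem
  exact hmem.2

lemma lemC {V : ℕ → Set X} {y : X} (hV : IsAdaptedBasis Φ y V)
    (h : FixProp Φ y) : IsStableChain Φ V := by
  obtain ⟨W, hWa, hyW, hW⟩ := h
  obtain ⟨m₀, hm₀⟩ := exists_basis_subset (basis_antitone hV)
    (fun ℓ => ((hV.2.1 ℓ).2.1).1) hV.2.2.2.2 hWa.2.1.2 hyW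
  refine ⟨m₀, fun ℓ hℓ => Set.Subset.antisymm ?_ (stabChain_mono (basis_antitone hV) hℓ)⟩
  rintro f ⟨hf, hfix⟩
  refine ⟨hf, fun z hz => ?_⟩
  exact hW f hf ⟨V ℓ, (hV.2.1 ℓ).2.1.2, hV.2.2.1 ℓ, hfix⟩ z (hm₀ hz)

lemma lemB (hΦ : IsActionHom Φ) (hmin : IsMinimalAction Φ) {x : X} (y : X)
    (h : FixProp Φ x) : FixProp Φ y := by
  obtain ⟨W, hWa, hxW, hW⟩ := h
  -- find a with y ∈ Φ a '' W
  obtain ⟨p, ⟨g0, hg0⟩, hpW⟩ := (hmin y).exists_mem_open hWa.2.1.2 hWa.1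
  set a : G := g0⁻¹ with ha
  have hyW' : y ∈ Φ a '' W := ⟨Φ g0 y, by rw [show Φ g0 y = p from hg0]; exact hpW, inv_apply_apply hΦ g0 y⟩
  have hclopen : IsClopen (Φ a '' W) := by
    rw [Set.image_eq_preimage_of_inverse (fun z => inv_apply_apply hΦ a z)
      (fun z => apply_inv_apply hΦ a z)]
    exact hWa.2.1.preimage (Φ a⁻¹).continuous
  have hadapted : IsAdapted Φ (Φ a '' W) := by
    refine ⟨hWa.1.image _, hclopen, fun k hk => ?_⟩
    obtain ⟨q, hq1, hq2⟩ := hk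
    have hq1' : Φ a⁻¹ q ∈ Φ (a⁻¹ * k * a) '' W := by
      have h0 := Set.mem_image_of_mem (Φ a⁻¹) hq1
      rwa [image_image hΦ, image_image hΦ] at h0
    have hq2' : Φ a⁻¹ q ∈ W := by
      have := Set.mem_image_of_mem (Φ a⁻¹) hq2
      rwa [inv_image_image hΦ] at this
    have := hWa.2.2 (a⁻¹ * k * a) ⟨Φ a⁻¹ q, hq1', hq2'⟩
    calc Φ k '' (Φ a '' W) = Φ (k * a) '' W := image_image hΦ k a W
      _ = Φ a '' (Φ (a⁻¹ * k * a) '' W) := by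
          rw [image_image hΦ]; congr 1; group
      _ = Φ a '' W := by rw [this]
  refine ⟨Φ a '' W, hadapted, hyW', ?_⟩
  rintro f hf ⟨M, hM, hyM, hfix⟩
  -- choose g with Φ g x ∈ Φ a '' W ∩ M
  have hopen : IsOpen (Φ a '' W ∩ M) := hclopen.2.inter hM
  obtain ⟨p', ⟨g, hg⟩, hp0⟩ := (hmin x).exists_mem_open hopen ⟨y, hyW', hyM⟩
  have hp' : Φ g x ∈ Φ a '' W ∩ M := by rw [show Φ g x = p' from hg]; exact hp0
  -- conjugated map
  set F : C(X, X) := ((Φ g⁻¹ : C(X, X)).comp (f.comp (Φ g : C(X, X)))) with hF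
  have hFcl : F ∈ actionClosure Φ := by
    have hcont : Continuous fun u : C(X, X) =>
        ((Φ g⁻¹ : C(X, X)).comp (u.comp (Φ g : C(X, X)))) :=
      (ContinuousMap.continuous_postcomp _).comp (ContinuousMap.continuous_precomp _)
    refine map_mem_closure hcont hf ?_
    rintro u ⟨h', rfl⟩
    exact ⟨g⁻¹ * (h' * g), by
      ext z
      simp only [ContinuousMap.comp_apply, ContinuousMap.coe_coe]
      rw [hΦ.2, hΦ.2]⟩
  have hFfix : ∀ z ∈ W, F z = z := by
    apply hW F hFcl
    refine ⟨Φ g ⁻¹' M, hM.preimage (Φ g).continuous, hp'.2, fun z hz => ?_⟩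
    show Φ g⁻¹ (f (Φ g z)) = z
    rw [hfix _ hz, inv_apply_apply hΦ]
  -- Φ g '' W = Φ a '' W
  have hGW : Φ g '' W = Φ a '' W := by
    have hq1 : Φ a⁻¹ (Φ g x) ∈ Φ (a⁻¹ * g) '' W := by
      rw [← image_image hΦ]
      exact Set.mem_image_of_mem _ (Set.mem_image_of_mem _ hxW)
    have hq2 : Φ a⁻¹ (Φ g x) ∈ W := by
      have := Set.mem_image_of_mem (Φ a⁻¹) hp'.1
      rwa [inv_image_image hΦ] at this
    have heq := hWa.2.2 (a⁻¹ * g) ⟨Φ a⁻¹ (Φ g x), hq1, hq2⟩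
    calc Φ g '' W = Φ a '' (Φ (a⁻¹ * g) '' W) := by
          rw [image_image hΦ]; congr 1; group
      _ = Φ a '' W := by rw [heq]
  intro z hz
  rw [← hGW] at hz
  obtain ⟨w, hw, rfl⟩ := hz
  have := hFfix w hw
  have hFw : Φ g⁻¹ (f (Φ g w)) = w := this
  calc f (Φ g w) = Φ g (Φ g⁻¹ (f (Φ g w))) := (apply_inv_apply hΦ g _).symm
    _ = Φ g w := by rw [hFw]
end Aux

/-- Whether the stabilizer chain is eventually constant is independent of
basepoint and adapted neighborhood basis. -/
theorem stmt11 {X : Type*} [MetricSpace X] [CompactSpace X] [TotallyDisconnectedSpace X]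
    [Nonempty X] (hX : Perfect (Set.univ : Set X))
    {G : Type*} [Group G] [Countable G] (Φ : G → X ≃ₜ X) (hΦ : IsCantorAction Φ)
    (x y : X) (U V : ℕ → Set X)
    (hU : IsAdaptedBasis Φ x U) (hV : IsAdaptedBasis Φ y V) :
    IsStableChain Φ U ↔ IsStableChain Φ V := by
  constructor
  · intro hs
    exact lemC hV (lemB hΦ.1 hΦ.2.1 y (lemA hU hs))
  · intro hs
    exact lemC hU (lemB hΦ.1 hΦ.2.1 x (lemA hV hs))
end

section
/- Let (X,G,Φ) be a Cantor action with a fixed compatible metric d, and let {U_ℓ} be an adapted neighborhood basis at x ∈ X with stabilizer chain K_ℓ := {f ∈ G(Φ) : f(z) = z for all z ∈ U_ℓ}. Then the following are equivalent: (i) the chain {K_ℓ} is eventually constant (there is ℓ₀ with K_ℓ = K_{ℓ₀} for all ℓ ≥ ℓ₀); (ii) the action of G(Φ) on X is locally completely quasi-analytic, i.e., there exists ε > 0 such that for every adapted clopen set U with diam(U) < ε, every adapted clopen set V ⊆ U, and all f₁, f₂ ∈ G(Φ): if f₁(z) = f₂(z) for all z ∈ V, then f₁(z) = f₂(z) for all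 z ∈ U. -/
open Set Topology Filter

/-- The stabilizer chain is eventually constant iff the action of the
Ellis group is locally completely quasi-analytic. -/
theorem stmt12 {X : Type*} [MetricSpace X] [CompactSpace X] [TotallyDisconnectedSpace X]
    [Nonempty X] (hX : Perfect (Set.univ : Set X))
    {G : Type*} [Group G] [Countable G] (Φ : G → X ≃ₜ X) (hΦ : IsCantorAction Φ)
    (x : X) (U : ℕ → Set X) (hU : IsAdaptedBasis Φ x U) :
    IsStableChain Φ U ↔ IsLCQA Φ := by
  obtain ⟨hA, hMin, hE⟩ := hΦ
  obtain ⟨hU0, hAd, hxU, hchain, hInter⟩ := hU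
  have hinv : ∀ (g : G) (a : X), Φ g⁻¹ (Φ g a) = a := by
    intro g a
    have h := hA.2 g⁻¹ g a
    rw [inv_mul_cancel] at h
    rw [← h, hA.1]
  have hinv' : ∀ (g : G) (a : X), Φ g (Φ g⁻¹ a) = a := by
    intro g a
    have h := hA.2 g g⁻¹ a
    rw [mul_inv_cancel] at h
    rw [← h, hA.1]
  have hclopen : ∀ ℓ, IsClopen (U ℓ) := fun ℓ => (hAd ℓ).2.1
  have hanti : Antitone U := antitone_nat_of_succ_le fun n => (hchain n).subset
  have hbdd : ∀ s : Set X, Bornology.IsBounded s := fun s =>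
    isCompact_univ.isBounded.subset (Set.subset_univ s)
  have hnhds : ∀ O : Set X, IsOpen O → x ∈ O → ∃ ℓ, U ℓ ⊆ O := by
    intro O hO hxO
    apply exists_subset_nhds_of_isCompact'
      (fun m n => ⟨max m n, hanti (le_max_left m n), hanti (le_max_right m n)⟩)
      (fun ℓ => (hclopen ℓ).isClosed.isCompact) (fun ℓ => (hclopen ℓ).isClosed)
    intro y hy
    rw [hInter, Set.mem_singleton_iff] at hy
    subst hy
    exact hO.mem_nhds hxO
  have hmemcl : ∀ f : C(X, X), f ∈ actionClosure Φ ↔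
      ∀ ε : ℝ, 0 < ε → ∃ g : G, dist f ((Φ g : C(X, X))) < ε := by
    intro f
    rw [actionClosure, Metric.mem_closure_iff]
    constructor
    · intro h ε hε
      obtain ⟨b, ⟨g, rfl⟩, hb⟩ := h ε hε
      exact ⟨g, hb⟩
    · intro h ε hε
      obtain ⟨g, hg⟩ := h ε hε
      exact ⟨_, ⟨g, rfl⟩, hg⟩
  have happ : ∀ (g : G) (z : X), ((Φ g : C(X, X))) z = Φ g z := fun _ _ => rfl
  have hptle : ∀ (f : C(X, X)) (g : G) (z : X),
      dist (f z) (Φ g z) ≤ dist f ((Φ g : C(X, X))) := fun f g z =>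
    ContinuousMap.dist_apply_le_dist (f := f) (g := ((Φ g : C(X, X)))) z
  have hsupdist : ∀ (f g : C(X, X)) (ε : ℝ), 0 < ε →
      (∀ z, dist (f z) (g z) ≤ ε / 2) → dist f g < ε := by
    intro f g ε hε h
    have := (ContinuousMap.dist_le (by positivity)).mpr h
    linarith
  constructor
  · rintro ⟨ℓ₀, hstab⟩
    obtain ⟨ε', hε', hball⟩ := Metric.isOpen_iff.mp (hclopen ℓ₀).isOpen x (hxU ℓ₀)
    obtain ⟨δ, hδ, hδspec⟩ := hE (ε' / 2) (by positivity)
    refine ⟨δ, hδ, ?_⟩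
    intro A hAad hAdiam V hVad hVA f₁ hf₁ f₂ hf₂ hagree
    -- f₂ is bijective
    have hsurj : Function.Surjective ⇑f₂ := by
      intro y
      have hcl : y ∈ closure (Set.range ⇑f₂) := by
        rw [Metric.mem_closure_iff]
        intro r hr
        obtain ⟨g, hg⟩ := (hmemcl f₂).1 hf₂ r hr
        refine ⟨f₂ ((Φ g).symm y), Set.mem_range_self _, ?_⟩
        rw [dist_comm]
        calc dist (f₂ ((Φ g).symm y)) y
            = dist (f₂ ((Φ g).symm y)) ((Φ g : C(X, X)) ((Φ g).symm y)) := by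
              rw [happ, (Φ g).apply_symm_apply]
          _ ≤ dist f₂ (Φ g : C(X, X)) := ContinuousMap.dist_apply_le_dist _
          _ < r := hg
      rwa [IsClosed.closure_eq (isCompact_range f₂.continuous).isClosed] at hcl
    have hinj : Function.Injective ⇑f₂ := by
      intro a b hab
      by_contra hne
      have hr : 0 < dist a b := dist_pos.mpr hne
      obtain ⟨δ', hδ', hδ'spec⟩ := hE (dist a b) hr
      obtain ⟨g, hg⟩ := (hmemcl f₂).1 hf₂ (δ' / 2) (by positivity)
      have h1 : dist (Φ g a) (Φ g b) < δ' := by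
        calc dist (Φ g a) (Φ g b)
            ≤ dist (Φ g a) (f₂ a) + dist (f₂ b) (Φ g b) := by
              rw [hab]; exact dist_triangle _ _ _
          _ < δ' / 2 + δ' / 2 := by
              apply add_lt_add
              · rw [dist_comm]
                exact lt_of_le_of_lt (hptle f₂ g a) hg
              · exact lt_of_le_of_lt (hptle f₂ g b) hg
          _ = δ' := by ring
      have h2 := hδ'spec g⁻¹ (Φ g a) (Φ g b) h1
      rw [hinv, hinv] at h2
      exact lt_irrefl _ h2
    have hbij : Function.Bijective ⇑f₂ := ⟨hinj, hsurj⟩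
    let e : X ≃ X := Equiv.ofBijective ⇑f₂ hbij
    have hecont : Continuous ⇑e := f₂.continuous
    let h₂ : X ≃ₜ X := hecont.homeoOfEquivCompactToT2
    have hcoe : ∀ y, h₂ y = f₂ y := fun _ => rfl
    let F : C(X, X) := ⟨fun z => h₂.symm (f₁ z), h₂.symm.continuous.comp f₁.continuous⟩
    have hFapp : ∀ z, F z = h₂.symm (f₁ z) := fun _ => rfl
    have hFmem : F ∈ actionClosure Φ := by
      rw [hmemcl]
      intro r hr
      obtain ⟨δ₁, hδ₁, hδ₁spec⟩ := hE (r / 2) (by positivity)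
      obtain ⟨g₁, hg₁⟩ := (hmemcl f₁).1 hf₁ (δ₁ / 2) (by positivity)
      obtain ⟨g₂, hg₂⟩ := (hmemcl f₂).1 hf₂ (δ₁ / 2) (by positivity)
      refine ⟨g₂⁻¹ * g₁, hsupdist _ _ r hr ?_⟩
      intro z
      set w := h₂.symm (f₁ z) with hw
      have hfw : f₂ w = f₁ z := h₂.apply_symm_apply (f₁ z)
      have h1 : dist (Φ g₁ z) (Φ g₂ w) < δ₁ := by
        calc dist (Φ g₁ z) (Φ g₂ w)
            ≤ dist (Φ g₁ z) (f₁ z) + dist (f₁ z) (Φ g₂ w) := dist_triangle _ _ _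
          _ < δ₁ / 2 + δ₁ / 2 := by
              apply add_lt_add
              · rw [dist_comm]
                exact lt_of_le_of_lt (hptle f₁ g₁ z) hg₁
              · rw [← hfw]
                exact lt_of_le_of_lt (hptle f₂ g₂ w) hg₂
          _ = δ₁ := by ring
      have h2 := hδ₁spec g₂⁻¹ (Φ g₁ z) (Φ g₂ w) h1
      rw [hinv] at h2
      rw [hFapp, happ, hA.2 g₂⁻¹ g₁ z, dist_comm]
      exact le_of_lt h2
    -- find k with Φ k x ∈ V
    obtain ⟨y, ⟨k, hk⟩, hyV⟩ := (hMin x).exists_mem_open hVad.2.1.isOpen hVad.1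
    have hk' : Φ k x = y := hk
    have hkx : Φ k x ∈ V := by rwa [hk']
    have hFfix : ∀ z ∈ V, F z = z := by
      intro z hz
      rw [hFapp, hagree z hz, ← hcoe, h₂.symm_apply_apply]
    let F' : C(X, X) := ⟨fun z => Φ k⁻¹ (F (Φ k z)),
      (Φ k⁻¹).continuous.comp (F.continuous.comp (Φ k).continuous)⟩
    have hF'app : ∀ z, F' z = Φ k⁻¹ (F (Φ k z)) := fun _ => rfl
    have hF'mem : F' ∈ actionClosure Φ := by
      rw [hmemcl]
      intro r hr
      obtain ⟨δ₁, hδ₁, hδ₁spec⟩ := hE (r / 2) (by positivity)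
      obtain ⟨g, hg⟩ := (hmemcl F).1 hFmem δ₁ hδ₁
      refine ⟨k⁻¹ * (g * k), hsupdist _ _ r hr ?_⟩
      intro z
      have h1 : dist (F (Φ k z)) (Φ g (Φ k z)) < δ₁ :=
        lt_of_le_of_lt (hptle F g (Φ k z)) hg
      have h2 := hδ₁spec k⁻¹ (F (Φ k z)) (Φ g (Φ k z)) h1
      rw [hF'app, happ, hA.2 k⁻¹ (g * k) z, hA.2 g k z]
      exact le_of_lt h2
    have hxW : x ∈ (⇑(Φ k)) ⁻¹' V := by
      show Φ k x ∈ V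
      exact hkx
    obtain ⟨ℓ₁, hℓ₁⟩ := hnhds ((⇑(Φ k)) ⁻¹' V) (hVad.2.1.isOpen.preimage (Φ k).continuous) hxW
    have hF'stab : F' ∈ stabChain Φ U (max ℓ₁ ℓ₀) := by
      refine ⟨hF'mem, ?_⟩
      intro z hz
      have hzW : Φ k z ∈ V := hℓ₁ (hanti (le_max_left ℓ₁ ℓ₀) hz)
      rw [hF'app, hFfix (Φ k z) hzW, hinv]
    rw [hstab (max ℓ₁ ℓ₀) (le_max_right ℓ₁ ℓ₀)] at hF'stab
    have hfix₀ : ∀ z ∈ U ℓ₀, F' z = z := hF'stab.2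
    -- every Φ k⁻¹ z for z ∈ A lands in U ℓ₀
    have hsmall : ∀ z ∈ A, Φ k⁻¹ z ∈ U ℓ₀ := by
      intro z hz
      have hzy : dist z (Φ k x) < δ := by
        have h1 : dist z (Φ k x) ≤ Metric.diam A :=
          Metric.dist_le_diam_of_mem (hbdd A) hz (hVA hkx)
        exact lt_of_le_of_lt h1 hAdiam
      have h2 := hδspec k⁻¹ z (Φ k x) hzy
      rw [hinv] at h2
      apply hball
      rw [Metric.mem_ball]
      linarith
    intro z hz
    have h3 := hfix₀ (Φ k⁻¹ z) (hsmall z hz)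
    rw [hF'app, hinv'] at h3
    have h4 : F z = z := by
      have := congrArg (Φ k) h3
      rwa [hinv', hinv'] at this
    rw [hFapp] at h4
    have := congrArg (⇑h₂) h4
    rw [h₂.apply_symm_apply] at this
    rw [this, hcoe]
  · rintro ⟨ε, hε, hQ⟩
    obtain ⟨ℓ₀, hℓ₀⟩ := hnhds (Metric.ball x (ε / 3)) Metric.isOpen_ball
      (Metric.mem_ball_self (by positivity))
    refine ⟨ℓ₀, fun ℓ hℓ => ?_⟩
    apply Set.Subset.antisymm
    · rintro f ⟨hfc, hfix⟩
      refine ⟨hfc, ?_⟩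
      have hdiam : Metric.diam (U ℓ₀) < ε := by
        have h1 : Metric.diam (U ℓ₀) ≤ Metric.diam (Metric.ball x (ε / 3)) :=
          Metric.diam_mono hℓ₀ Metric.isBounded_ball
        have h2 : Metric.diam (Metric.ball x (ε / 3)) ≤ 2 * (ε / 3) :=
          Metric.diam_ball (by positivity)
        linarith
      have hid : (Φ (1 : G) : C(X, X)) ∈ actionClosure Φ :=
        subset_closure ⟨1, rfl⟩
      have h5 := hQ (U ℓ₀) (hAd ℓ₀) hdiam (U ℓ) (hAd ℓ) (hanti hℓ) f hfc
        (Φ (1 : G) : C(X, X)) hid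
        (fun z hz => by rw [hfix z hz, happ, hA.1])
      intro z hz
      rw [h5 z hz, happ, hA.1]
    · rintro f ⟨hfc, hfix⟩
      exact ⟨hfc, fun z hz => hfix z (hanti hℓ hz)⟩
end

section
/- Let G and G' be finitely generated groups, let (X,G,Φ) and (X',G',Ψ) be Cantor actions, suppose (X',G',Ψ) is stable (there exist y' ∈ X' and an adapted neighborhood basis {V_ℓ} for Ψ at y' whose stabilizer chain {f ∈ G(Ψ) : f|_{V_ℓ} = id} is eventually constant), and suppose there is a continuous orbit equivalence h : X → X'. Then the actions are return equivalent: there exist an adapted clopen set U ⊆ X for Φ, an adapted clopen set V ⊆ X' for Ψ, a homeomorphism φ : U → V, and a group isomorphism θ : H_U → H'_V between the restricted holonomy groups H_U := {Φ(g)|_U : g ∈ G_U} ⊆ Homeo(U) and H'_V := {Ψ(k)|_V : k ∈ G'_V} ⊆ Homeo(V), such that φ(η(z)) = θ(η)(φ(z)) for all η ∈ H_U and all z ∈ U. -/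
open Set Topology Filter

section AuxLemmas

/-- Auxiliary: points of a compact metric space close enough are on the same side of a
clopen set. -/
theorem myaux_clopen_sep {X : Type*} [MetricSpace X] [CompactSpace X] {W : Set X}
    (hW : IsClopen W) : ∃ ε > 0, ∀ a b : X, dist a b < ε → (a ∈ W ↔ b ∈ W) := by
  have hcover : (univ : Set X) ⊆ ⋃ b : Bool, (if b then W else Wᶜ) := by
    intro x _
    by_cases hx : x ∈ W
    · exact mem_iUnion.2 ⟨true, by simpa using hx⟩
    · exact mem_iUnion.2 ⟨false, by simpa using hx⟩
  have hopen : ∀ b : Bool, IsOpen (if b then W else Wᶜ) := by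
    intro b; cases b
    · simpa using hW.compl.2
    · simpa using hW.2
  obtain ⟨δ, hδ, hball⟩ := lebesgue_number_lemma_of_metric isCompact_univ hopen hcover
  refine ⟨δ, hδ, fun a b hab => ?_⟩
  obtain ⟨i, hi⟩ := hball a (mem_univ a)
  have ha : a ∈ (if i then W else Wᶜ) := hi (by simpa [Metric.mem_ball] using hδ)
  have hb : b ∈ (if i then W else Wᶜ) := hi (by simpa [Metric.mem_ball, dist_comm] using hab)
  cases i
  · simp only [Bool.false_eq_true, if_false] at ha hb
    exact ⟨fun h => absurd h ha, fun h => absurd h hb⟩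
  · simp only [if_true, eq_self_iff_true] at ha hb
    exact ⟨fun _ => hb, fun _ => ha⟩

/-- Auxiliary: construction of adapted clopen sets inside any clopen neighborhood. -/
theorem myaux_adapted_sub {X : Type*} [MetricSpace X] [CompactSpace X] {G : Type*} [Group G]
    (Φ : G → X ≃ₜ X) (hhom : IsActionHom Φ) (heq : IsEquicontinuousAction Φ)
    {W : Set X} (hW : IsClopen W) {x₁ : X} (hx : x₁ ∈ W) :
    ∃ U : Set X, IsAdapted Φ U ∧ x₁ ∈ U ∧ U ⊆ W := by
  set U : Set X := {z | ∀ g : G, Φ g z ∈ W ↔ Φ g x₁ ∈ W} with hU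
  have hx₁U : x₁ ∈ U := fun g => Iff.rfl
  have hUW : U ⊆ W := by
    intro z hz
    have := hz 1
    rw [hhom.1 z, hhom.1 x₁] at this
    exact this.2 hx
  have hclosed : IsClosed U := by
    have : U = ⋂ g : G, {z | Φ g z ∈ W ↔ Φ g x₁ ∈ W} := by
      ext z; simp [hU, mem_iInter]
    rw [this]
    refine isClosed_iInter fun g => ?_
    by_cases hgx : Φ g x₁ ∈ W
    · have : {z | Φ g z ∈ W ↔ Φ g x₁ ∈ W} = (Φ g) ⁻¹' W := by
        ext z; simp [hgx]
      rw [this]; exact hW.1.preimage (Φ g).continuous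
    · have : {z | Φ g z ∈ W ↔ Φ g x₁ ∈ W} = (Φ g) ⁻¹' Wᶜ := by
        ext z; simp [hgx]
      rw [this]; exact hW.compl.1.preimage (Φ g).continuous
  have hopen : IsOpen U := by
    obtain ⟨ε, hε, hsep⟩ := myaux_clopen_sep hW
    obtain ⟨δ, hδ, hequi⟩ := heq ε hε
    rw [Metric.isOpen_iff]
    intro z hz
    refine ⟨δ, hδ, fun y hy => ?_⟩
    intro g
    have hd : dist (Φ g y) (Φ g z) < ε := hequi g y z (by simpa [Metric.mem_ball] using hy)
    exact (hsep _ _ hd).trans (hz g)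
  have hsub : ∀ g₀ : G, (∃ u ∈ U, Φ g₀ u ∈ U) → ∀ y ∈ U, Φ g₀ y ∈ U := by
    rintro g₀ ⟨u, hu, hu'⟩ y hy g
    have e1 : Φ g (Φ g₀ y) = Φ (g * g₀) y := (hhom.2 g g₀ y).symm
    have e2 : Φ g (Φ g₀ u) = Φ (g * g₀) u := (hhom.2 g g₀ u).symm
    rw [e1, hy (g * g₀), ← hu (g * g₀), ← e2, hu' g]
  have hinv : ∀ (g₀ : G) (z : X), Φ g₀⁻¹ (Φ g₀ z) = z := by
    intro g₀ z
    rw [← hhom.2 g₀⁻¹ g₀ z, inv_mul_cancel, hhom.1]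
  have hinv' : ∀ (g₀ : G) (z : X), Φ g₀ (Φ g₀⁻¹ z) = z := by
    intro g₀ z
    rw [← hhom.2 g₀ g₀⁻¹ z, mul_inv_cancel, hhom.1]
  refine ⟨U, ⟨⟨x₁, hx₁U⟩, ⟨hclosed, hopen⟩, ?_⟩, hx₁U, hUW⟩
  rintro g₀ ⟨w, ⟨u, hu, rfl⟩, hw⟩
  have fwd : Φ g₀ '' U ⊆ U := by
    rintro _ ⟨y, hy, rfl⟩
    exact hsub g₀ ⟨u, hu, hw⟩ y hy
  have bwd : Φ g₀⁻¹ '' U ⊆ U := by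
    rintro _ ⟨y, hy, rfl⟩
    refine hsub g₀⁻¹ ⟨Φ g₀ u, hw, ?_⟩ y hy
    rw [hinv g₀ u]; exact hu
  refine subset_antisymm fwd fun y hy => ?_
  exact ⟨Φ g₀⁻¹ y, bwd ⟨y, hy, rfl⟩, hinv' g₀ y⟩

/-- Auxiliary: equicontinuity gives uniform diameter control of all translates. -/
theorem myaux_diam_control {X : Type*} [MetricSpace X] [CompactSpace X] {G : Type*} [Group G]
    {Φ : G → X ≃ₜ X} (heq : IsEquicontinuousAction Φ) {δ : ℝ} (hδ : 0 < δ) :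
    ∃ δ₀ > 0, ∀ M : Set X, Metric.diam M < δ₀ → ∀ g : G, Metric.diam (Φ g '' M) < δ := by
  obtain ⟨δ₀, hδ₀, hequi⟩ := heq (δ / 2) (by linarith)
  refine ⟨δ₀, hδ₀, fun M hM g => ?_⟩
  have : Metric.diam (Φ g '' M) ≤ δ / 2 := by
    refine Metric.diam_le_of_forall_dist_le (by linarith) ?_
    rintro _ ⟨x, hx, rfl⟩ _ ⟨y, hy, rfl⟩
    have hxy : dist x y < δ₀ :=
      lt_of_le_of_lt (Metric.dist_le_diam_of_mem Metric.isBounded_of_compactSpace hx hy) hM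
    exact le_of_lt (hequi g x y hxy)
  linarith

/-- Auxiliary: uniform transfer for a single group element, via the Lebesgue number
lemma. -/
theorem myaux_transfer_single {X : Type*} [MetricSpace X] [CompactSpace X]
    {X' : Type*} [MetricSpace X'] {G : Type*} [Group G] {G' : Type*} [Group G']
    {Φ : G → X ≃ₜ X} {Ψ : G' → X' ≃ₜ X'} {h : X → X'}
    (hcoe1 : ∀ (x : X) (g : G), ∃ (k : G') (O : Set X), IsOpen O ∧ x ∈ O ∧
      ∀ z ∈ O, Ψ k (h z) = h (Φ g z)) (a : G) :
    ∃ δ > 0, ∀ M : Set X, M.Nonempty → Metric.diam M < δ →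
      ∃ k : G', ∀ z ∈ M, Ψ k (h z) = h (Φ a z) := by
  choose k O hopen hmem htr using fun x => hcoe1 x a
  have hcover : (univ : Set X) ⊆ ⋃ x : X, O x := fun x _ => mem_iUnion.2 ⟨x, hmem x⟩
  obtain ⟨δ, hδ, hball⟩ := lebesgue_number_lemma_of_metric isCompact_univ hopen hcover
  refine ⟨δ, hδ, fun M ⟨x₀, hx₀⟩ hM => ?_⟩
  obtain ⟨i, hi⟩ := hball x₀ (mem_univ x₀)
  refine ⟨k i, fun z hz => htr i z (hi ?_)⟩
  have : dist z x₀ ≤ Metric.diam M :=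
    Metric.dist_le_diam_of_mem Metric.isBounded_of_compactSpace hz hx₀
  exact Metric.mem_ball.2 (lt_of_le_of_lt this hM)

/-- Auxiliary: uniform transfer for a finite set of group elements. -/
theorem myaux_transfer_finite {X : Type*} [MetricSpace X] [CompactSpace X]
    {X' : Type*} [MetricSpace X'] {G : Type*} [Group G] {G' : Type*} [Group G']
    {Φ : G → X ≃ₜ X} {Ψ : G' → X' ≃ₜ X'} {h : X → X'}
    (hcoe1 : ∀ (x : X) (g : G), ∃ (k : G') (O : Set X), IsOpen O ∧ x ∈ O ∧
      ∀ z ∈ O, Ψ k (h z) = h (Φ g z)) {T : Set G} (hT : T.Finite) :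
    ∃ δ > 0, ∀ a ∈ T, ∀ M : Set X, M.Nonempty → Metric.diam M < δ →
      ∃ k : G', ∀ z ∈ M, Ψ k (h z) = h (Φ a z) := by
  refine Set.Finite.induction_on _ hT ⟨1, one_pos, by simp⟩ ?_
  intro a s _ _ ih
  obtain ⟨δ₁, hδ₁, h₁⟩ := myaux_transfer_single hcoe1 a
  obtain ⟨δ₂, hδ₂, h₂⟩ := ih
  refine ⟨min δ₁ δ₂, lt_min hδ₁ hδ₂, fun b hb M hMne hM => ?_⟩
  rcases hb with rfl | hb
  · exact h₁ M hMne (lt_of_lt_of_le hM (min_le_left _ _))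
  · exact h₂ b hb M hMne (lt_of_lt_of_le hM (min_le_right _ _))

/-- Auxiliary: every element of a group generated by `S` is a product of a list of
elements of `S ∪ S⁻¹`. -/
theorem myaux_list_repr {G : Type*} [Group G] {S : Set G}
    (hS : Subgroup.closure S = ⊤) (g : G) :
    ∃ l : List G, (∀ a ∈ l, a ∈ S ∪ (fun b : G => b⁻¹) '' S) ∧ l.prod = g := by
  have hg : g ∈ Subgroup.closure S := by rw [hS]; trivial
  induction hg using Subgroup.closure_induction with
  | mem x hx => exact ⟨[x], by simp [hx], by simp⟩
  | one => exact ⟨[], by simp, by simp⟩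
  | mul x y _ _ ihx ihy =>
    obtain ⟨l₁, h₁, rfl⟩ := ihx
    obtain ⟨l₂, h₂, rfl⟩ := ihy
    refine ⟨l₁ ++ l₂, ?_, by simp⟩
    intro a ha
    rcases List.mem_append.1 ha with h | h
    · exact h₁ a h
    · exact h₂ a h
  | inv x _ ihx =>
    obtain ⟨l, hl, rfl⟩ := ihx
    refine ⟨(l.map fun b => b⁻¹).reverse, ?_, (List.prod_inv_reverse l).symm⟩
    intro a ha
    rw [List.mem_reverse, List.mem_map] at ha
    obtain ⟨b, hb, rfl⟩ := ha
    rcases hl b hb with h | ⟨c, hc, rfl⟩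
    · exact Or.inr ⟨b, h, rfl⟩
    · simpa using Or.inl hc

/-- Auxiliary KEY lemma: for a continuous orbit equivalence of a finitely generated
equicontinuous action, the orbit transfer is uniform on all sets of sufficiently small
diameter. -/
theorem myaux_key_transfer {X : Type*} [MetricSpace X] [CompactSpace X]
    {X' : Type*} [MetricSpace X'] {G : Type*} [Group G] [Group.FG G] {G' : Type*} [Group G']
    {Φ : G → X ≃ₜ X} (hΦhom : IsActionHom Φ) (hΦeq : IsEquicontinuousAction Φ)
    {Ψ : G' → X' ≃ₜ X'} (hΨhom : IsActionHom Ψ) {h : X → X'}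
    (hcoe1 : ∀ (x : X) (g : G), ∃ (k : G') (O : Set X), IsOpen O ∧ x ∈ O ∧
      ∀ z ∈ O, Ψ k (h z) = h (Φ g z)) :
    ∃ δ₀ > 0, ∀ U : Set X, U.Nonempty → Metric.diam U < δ₀ →
      ∀ g : G, ∃ k : G', ∀ z ∈ U, Ψ k (h z) = h (Φ g z) := by
  obtain ⟨S, hScl, hSfin⟩ := Group.fg_iff.1 ‹Group.FG G›
  set T : Set G := S ∪ (fun b : G => b⁻¹) '' S with hT
  have hTfin : T.Finite := hSfin.union (hSfin.image _)
  obtain ⟨δ, hδ, htrans⟩ := myaux_transfer_finite hcoe1 hTfin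
  obtain ⟨δ₀, hδ₀, hdiam⟩ := myaux_diam_control hΦeq hδ
  refine ⟨δ₀, hδ₀, fun U hUne hU g => ?_⟩
  obtain ⟨l, hl, rfl⟩ := myaux_list_repr hScl g
  clear hScl
  induction l with
  | nil =>
    refine ⟨1, fun z _ => ?_⟩
    rw [List.prod_nil, hΨhom.1, hΦhom.1]
  | cons a l ih =>
    obtain ⟨k', hk'⟩ := ih fun b hb => hl b (List.mem_cons_of_mem a hb)
    have haT : a ∈ T := hl a List.mem_cons_self
    have hMne : (Φ l.prod '' U).Nonempty := hUne.image _
    have hMd : Metric.diam (Φ l.prod '' U) < δ := hdiam U hU l.prod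
    obtain ⟨ka, hka⟩ := htrans a haT _ hMne hMd
    refine ⟨ka * k', fun z hz => ?_⟩
    rw [List.prod_cons, hΦhom.2 a l.prod z, hΨhom.2 ka k' (h z), hk' z hz,
      hka (Φ l.prod z) ⟨z, hz, rfl⟩]

/-- The restricted holonomy group of an invariant set, as a subgroup of permutations. -/
def holoGroup {X : Type*} [MetricSpace X] {G : Type*} [Group G] (Φ : G → X ≃ₜ X)
    (hΦ : IsActionHom Φ) (U : Set X) : Subgroup (Equiv.Perm U) where
  carrier := {η : Equiv.Perm U | ∃ g : G, Φ g '' U = U ∧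
    ∀ z : U, (↑(η z) : X) = Φ g (z : X)}
  one_mem' := by
    refine ⟨1, ?_, fun z => (hΦ.1 _).symm⟩
    rw [show ⇑(Φ 1) = id from funext hΦ.1, Set.image_id]
  mul_mem' := by
    rintro η₁ η₂ ⟨g₁, hg₁, he₁⟩ ⟨g₂, hg₂, he₂⟩
    refine ⟨g₁ * g₂, ?_, ?_⟩
    · have hc : ⇑(Φ (g₁ * g₂)) = ⇑(Φ g₁) ∘ ⇑(Φ g₂) := funext fun z => hΦ.2 g₁ g₂ z
      rw [hc, Set.image_comp, hg₂, hg₁]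
    · intro z
      have hmul : (η₁ * η₂) z = η₁ (η₂ z) := rfl
      rw [hmul, he₁ (η₂ z), he₂ z, ← hΦ.2]
  inv_mem' := by
    rintro η ⟨g, hg, he⟩
    have hinv : ∀ z : X, Φ g⁻¹ (Φ g z) = z := fun z => by
      rw [← hΦ.2, inv_mul_cancel, hΦ.1]
    refine ⟨g⁻¹, ?_, ?_⟩
    · have hcomp : ⇑(Φ g⁻¹) ∘ ⇑(Φ g) = id := funext hinv
      calc ⇑(Φ g⁻¹) '' U = ⇑(Φ g⁻¹) '' (⇑(Φ g) '' U) := by rw [hg]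
        _ = (⇑(Φ g⁻¹) ∘ ⇑(Φ g)) '' U := (Set.image_comp _ _ _).symm
        _ = U := by rw [hcomp, Set.image_id]
    · intro z
      have h1 : (↑(η (η⁻¹ z)) : X) = Φ g ↑(η⁻¹ z) := he (η⁻¹ z)
      rw [show η (η⁻¹ z) = z from η.apply_symm_apply z] at h1
      calc (↑(η⁻¹ z) : X) = Φ g⁻¹ (Φ g ↑(η⁻¹ z)) := (hinv _).symm
        _ = Φ g⁻¹ ↑z := by rw [← h1]

end AuxLemmas

/-- Continuously orbit equivalent Cantor actions of finitely generated
groups, one of which is stable, are return equivalent. -/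
theorem stmt14 {X : Type*} [MetricSpace X] [CompactSpace X] [TotallyDisconnectedSpace X]
    [Nonempty X] (hX : Perfect (Set.univ : Set X))
    {X' : Type*} [MetricSpace X'] [CompactSpace X'] [TotallyDisconnectedSpace X']
    [Nonempty X'] (hX' : Perfect (Set.univ : Set X'))
    {G : Type*} [Group G] [Countable G] [Group.FG G]
    {G' : Type*} [Group G'] [Countable G'] [Group.FG G']
    (Φ : G → X ≃ₜ X) (hΦ : IsCantorAction Φ)
    (Ψ : G' → X' ≃ₜ X') (hΨ : IsCantorAction Ψ)
    (hstable : ∃ (y' : X') (V : ℕ → Set X'), IsAdaptedBasis Ψ y' V ∧ IsStableChain Ψ V)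
    (h : X ≃ₜ X') (hcoe : IsContinuousOrbitEquivalence Φ Ψ h) :
    ∃ (U : Set X) (V : Set X'), IsAdapted Φ U ∧ IsAdapted Ψ V ∧
      ∃ (HU : Subgroup (Equiv.Perm U)) (HV : Subgroup (Equiv.Perm V)),
        (HU : Set (Equiv.Perm U)) =
          {η : Equiv.Perm U | ∃ g : G, Φ g '' U = U ∧
            ∀ z : U, (↑(η z) : X) = Φ g (z : X)} ∧
        (HV : Set (Equiv.Perm V)) =
          {η : Equiv.Perm V | ∃ k : G', Ψ k '' V = V ∧
            ∀ w : V, (↑(η w) : X') = Ψ k (w : X')} ∧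
        ∃ (φ : U ≃ₜ V) (θ : HU ≃* HV),
          ∀ (η : HU) (z : U), φ ((η : Equiv.Perm U) z) = (θ η : Equiv.Perm V) (φ z) := by
  obtain ⟨hΦhom, hΦmin, hΦeq⟩ := hΦ
  obtain ⟨hΨhom, hΨmin, hΨeq⟩ := hΨ
  -- uniform forward and backward transfer
  obtain ⟨δ₁, hδ₁, HF⟩ := myaux_key_transfer hΦhom hΦeq hΨhom hcoe.1
  obtain ⟨δ₂, hδ₂, HB⟩ := myaux_key_transfer hΨhom hΨeq hΦhom hcoe.2
  -- uniform continuity of h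
  obtain ⟨δ₃, hδ₃, hh⟩ := Metric.uniformContinuous_iff.1
    (CompactSpace.uniformContinuous_of_continuous h.continuous) (δ₂ / 2) (by linarith)
  set r : ℝ := min δ₁ δ₃ with hrdef
  have hr : 0 < r := lt_min hδ₁ hδ₃
  obtain ⟨x₁⟩ := ‹Nonempty X›
  -- small clopen neighborhood
  obtain ⟨W, hWclopen, hx₁W, hWball⟩ :=
    compact_exists_isClopen_in_isOpen (Metric.isOpen_ball (x := x₁) (ε := r / 4))
      (Metric.mem_ball_self (by positivity))
  -- adapted set U inside it
  obtain ⟨U, hUad, hx₁U, hUW⟩ := myaux_adapted_sub Φ hΦhom hΦeq hWclopen hx₁W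
  have hUne : U.Nonempty := ⟨x₁, hx₁U⟩
  have hUdiam : Metric.diam U < r := by
    have h1 : Metric.diam U ≤ Metric.diam (Metric.ball x₁ (r / 4)) :=
      Metric.diam_mono (hUW.trans hWball) Metric.isBounded_of_compactSpace
    have h2 : Metric.diam (Metric.ball x₁ (r / 4)) ≤ 2 * (r / 4) :=
      Metric.diam_ball (by positivity)
    linarith
  -- the image set V := h '' U
  have hVne : (⇑h '' U).Nonempty := hUne.image _
  have himg_inv : ∀ s : Set X', ⇑h '' (⇑h.symm '' s) = s := by
    intro s
    rw [Set.image_image]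
    simp
  have hsymm_img : ⇑h.symm '' (⇑h '' U) = U := by
    rw [Set.image_image]
    simp
  have hVclopen : IsClopen (⇑h '' U) := by
    have : ⇑h '' U = ⇑h.symm ⁻¹' U := by
      ext w
      constructor
      · rintro ⟨u, hu, rfl⟩
        simpa using hu
      · intro hw
        exact ⟨h.symm w, hw, by simp⟩
    rw [this]
    exact hUad.2.1.preimage h.symm.continuous
  have hVdiam : Metric.diam (⇑h '' U) < δ₂ := by
    have hle : Metric.diam (⇑h '' U) ≤ δ₂ / 2 := by
      refine Metric.diam_le_of_forall_dist_le (by linarith) ?_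
      rintro _ ⟨a, ha, rfl⟩ _ ⟨b, hb, rfl⟩
      have hab : dist a b < δ₃ := by
        have := Metric.dist_le_diam_of_mem Metric.isBounded_of_compactSpace ha hb
        have hr3 : r ≤ δ₃ := min_le_right _ _
        linarith
      exact (hh hab).le
    linarith
  -- the two transfer properties
  have HFU : ∀ g : G, ∃ k : G', ∀ z ∈ U, Ψ k (h z) = h (Φ g z) := fun g =>
    HF U hUne (lt_of_lt_of_le hUdiam (min_le_left _ _)) g
  have HBV : ∀ k : G', ∃ g : G, ∀ w ∈ ⇑h '' U, Φ g (h.symm w) = h.symm (Ψ k w) := fun k =>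
    HB (⇑h '' U) hVne hVdiam k
  -- image computations
  have himgF : ∀ (g : G) (k : G'), (∀ z ∈ U, Ψ k (h z) = h (Φ g z)) →
      ⇑(Ψ k) '' (⇑h '' U) = ⇑h '' (⇑(Φ g) '' U) := by
    intro g k htr
    calc ⇑(Ψ k) '' (⇑h '' U) = (fun z => Ψ k (h z)) '' U := Set.image_image _ _ _
      _ = (fun z => h (Φ g z)) '' U := Set.image_congr htr
      _ = ⇑h '' (⇑(Φ g) '' U) := (Set.image_image _ _ _).symm
  have himgB : ∀ (k : G') (g : G), (∀ w ∈ ⇑h '' U, Φ g (h.symm w) = h.symm (Ψ k w)) →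
      ⇑h.symm '' (⇑(Ψ k) '' (⇑h '' U)) = ⇑(Φ g) '' U := by
    intro k g htr
    calc ⇑h.symm '' (⇑(Ψ k) '' (⇑h '' U)) = (fun w => h.symm (Ψ k w)) '' (⇑h '' U) :=
          Set.image_image _ _ _
      _ = (fun w => Φ g (h.symm w)) '' (⇑h '' U) := (Set.image_congr htr).symm
      _ = ⇑(Φ g) '' (⇑h.symm '' (⇑h '' U)) := (Set.image_image _ _ _).symm
      _ = ⇑(Φ g) '' U := by rw [hsymm_img]
  -- V is adapted
  have hVad : IsAdapted Ψ (⇑h '' U) := by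
    refine ⟨hVne, hVclopen, fun k hk => ?_⟩
    obtain ⟨w₀, hw₀img, hw₀⟩ := hk
    obtain ⟨v₀, hv₀, rfl⟩ := hw₀img
    obtain ⟨g, htr⟩ := HBV k
    have himg : ⇑h.symm '' (⇑(Ψ k) '' (⇑h '' U)) = ⇑(Φ g) '' U := himgB k g htr
    have h1 : h.symm (Ψ k v₀) ∈ ⇑(Φ g) '' U := by
      rw [← himg]
      exact ⟨Ψ k v₀, ⟨v₀, hv₀, rfl⟩, rfl⟩
    have h2 : h.symm (Ψ k v₀) ∈ U := by
      rw [← hsymm_img]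
      exact ⟨Ψ k v₀, hw₀, rfl⟩
    have hgU : ⇑(Φ g) '' U = U := hUad.2.2 g ⟨_, h1, h2⟩
    calc ⇑(Ψ k) '' (⇑h '' U) = ⇑h '' (⇑h.symm '' (⇑(Ψ k) '' (⇑h '' U))) :=
          (himg_inv _).symm
      _ = ⇑h '' (⇑(Φ g) '' U) := by rw [himg]
      _ = ⇑h '' U := by rw [hgU]
  -- the holonomy subgroups
  refine ⟨U, ⇑h '' U, hUad, hVad, holoGroup Φ hΦhom U, holoGroup Ψ hΨhom (⇑h '' U),
    rfl, rfl, ?_⟩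
  -- the conjugating homeomorphism and isomorphism
  set e : ↥U ≃ ↥(⇑h '' U) := h.toEquiv.image U with hedef
  have hecoe : ∀ x : ↥U, (↑(e x) : X') = h ↑x := fun x => rfl
  have hesymm : ∀ y : ↥(⇑h '' U), (↑(e.symm y) : X) = h.symm ↑y := fun y => rfl
  have heval : ∀ y : ↥(⇑h '' U), h (↑(e.symm y) : X) = (↑y : X') := by
    intro y
    rw [hesymm y]
    simp
  set P : Equiv.Perm ↥U ≃* Equiv.Perm ↥(⇑h '' U) :=
    { Equiv.permCongr e with
      map_mul' := fun p q => by
        ext w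
        simp [Equiv.permCongr_apply, Equiv.Perm.mul_apply] } with hPdef
  have hPapply : ∀ (p : Equiv.Perm ↥U) (w : ↥(⇑h '' U)), P p w = e (p (e.symm w)) :=
    fun p w => rfl
  have hPsymm : ∀ (τ : Equiv.Perm ↥(⇑h '' U)) (z : ↥U), P.symm τ z = e.symm (τ (e z)) :=
    fun τ z => rfl
  have memV : ∀ η : Equiv.Perm ↥U, η ∈ holoGroup Φ hΦhom U →
      P η ∈ holoGroup Ψ hΨhom (⇑h '' U) := by
    rintro η ⟨g, hg, hη⟩
    obtain ⟨k, htr⟩ := HFU g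
    refine ⟨k, ?_, ?_⟩
    · rw [himgF g k htr, hg]
    · intro w
      have hmem : (↑(e.symm w) : X) ∈ U := (e.symm w).2
      calc (↑(P η w) : X') = h ↑(η (e.symm w)) := rfl
        _ = h (Φ g ↑(e.symm w)) := by rw [hη]
        _ = Ψ k (h ↑(e.symm w)) := (htr _ hmem).symm
        _ = Ψ k ↑w := by rw [heval w]
  have memU : ∀ τ : Equiv.Perm ↥(⇑h '' U), τ ∈ holoGroup Ψ hΨhom (⇑h '' U) →
      P.symm τ ∈ holoGroup Φ hΦhom U := by
    rintro τ ⟨k, hk, hτ⟩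
    obtain ⟨g, htr⟩ := HBV k
    refine ⟨g, ?_, ?_⟩
    · have := himgB k g htr
      rw [hk, hsymm_img] at this
      exact this.symm
    · intro z
      have hmem : (↑(e z) : X') ∈ ⇑h '' U := (e z).2
      calc (↑(P.symm τ z) : X) = h.symm ↑(τ (e z)) := rfl
        _ = h.symm (Ψ k ↑(e z)) := by rw [hτ]
        _ = Φ g (h.symm ↑(e z)) := (htr _ hmem).symm
        _ = Φ g ↑z := by rw [hecoe z]; simp
  refine ⟨h.image U,
    { toFun := fun η => ⟨P ↑η, memV _ η.2⟩
      invFun := fun τ => ⟨P.symm ↑τ, memU _ τ.2⟩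
      left_inv := fun η => Subtype.ext (P.symm_apply_apply _)
      right_inv := fun τ => Subtype.ext (P.apply_symm_apply _)
      map_mul' := fun a b => Subtype.ext (map_mul P _ _) }, ?_⟩
  intro η z
  show e ((↑η : Equiv.Perm ↥U) z) = P (↑η) (e z)
  rw [hPapply, Equiv.symm_apply_apply]
end

section
/- Let (X,G,Φ) be a Cantor action with a fixed compatible metric d, and suppose the action is locally quasi-analytic: there exists ε > 0 such that for every adapted clopen set U with diam(U) < ε, every adapted clopen set V ⊆ U, and all g₁, g₂ ∈ G, if Φ(g₁)(z) = Φ(g₂)(z) for all z ∈ V then Φ(g₁)(z) = Φ(g₂)(z) for all z ∈ U. Then the germinal groupoid of the action is Hausdorff; concretely, for all g, g' ∈ G and x ∈ X with Φ(g)(x) = Φ(g')(x): if there exist a sequence (x_i) in X converging to x and open sets W_i with x_i ∈ W_i such that Φ(g) and Φ(g') agree on W_i for every i, then Φ(g) and Φ(g') agree on some open neighborhood of x. -/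
open Set Topology Filter

/-- A locally constant `ℕ`-valued function on a space. -/
private def LocConst {X : Type*} [TopologicalSpace X] (c : X → ℕ) : Prop :=
  ∀ a : X, ∃ O : Set X, IsOpen O ∧ a ∈ O ∧ ∀ z ∈ O, c z = c a

private lemma nat_eq_of_abs_lt {m k : ℕ} (h : |(m : ℝ) - k| < 1) : m = k := by
  have h' : |(m : ℤ) - k| < 1 := by
    have := h
    rw [← Int.cast_natCast (R := ℝ) m, ← Int.cast_natCast (R := ℝ) k, ← Int.cast_sub,
      ← Int.cast_abs] at this
    exact_mod_cast this
  have h2 := abs_lt.mp h'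
  omega

/-- Locally constant functions on compact metric spaces are uniformly locally constant. -/
private lemma locConst_uniform {X : Type*} [MetricSpace X] [CompactSpace X] {c : X → ℕ}
    (hc : LocConst c) : ∃ η : ℝ, 0 < η ∧ ∀ a b : X, dist a b < η → c a = c b := by
  have hcont : Continuous fun y : X => (c y : ℝ) := by
    rw [continuous_iff_continuousAt]
    intro a
    obtain ⟨O, hO, haO, hconst⟩ := hc a
    have : (fun y : X => (c y : ℝ)) =ᶠ[nhds a] fun _ => (c a : ℝ) := by
      filter_upwards [hO.mem_nhds haO] with z hz
      simp [hconst z hz]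
    exact this.continuousAt
  have := CompactSpace.uniformContinuous_of_continuous hcont
  rw [Metric.uniformContinuous_iff] at this
  obtain ⟨η, hη, h⟩ := this 1 one_pos
  exact ⟨η, hη, fun a b hab => nat_eq_of_abs_lt (by simpa [Real.dist_eq] using h hab)⟩

/-- Existence of a locally constant function with small fibers. -/
private lemma exists_locConst_small {X : Type*} [MetricSpace X] [CompactSpace X]
    [TotallyDisconnectedSpace X] [Nonempty X] {δ : ℝ} (hδ : 0 < δ) :
    ∃ c : X → ℕ, LocConst c ∧ ∀ a b : X, c a = c b → dist a b ≤ δ / 2 := by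
  -- clopen cover by small sets
  have hcov : ∀ y : X, ∃ V : Set X, IsClopen V ∧ y ∈ V ∧ V ⊆ Metric.ball y (δ / 4) :=
    fun y => compact_exists_isClopen_in_isOpen Metric.isOpen_ball
      (Metric.mem_ball_self (by linarith))
  choose C hCclopen hCmem hCsub using hcov
  obtain ⟨t, ht⟩ := isCompact_univ.elim_finite_subcover C (fun y => (hCclopen y).2)
    (by intro y _; exact mem_iUnion.2 ⟨y, hCmem y⟩)
  obtain ⟨x₀⟩ := ‹Nonempty X›
  set l : List X := t.toList with hl
  have hex : ∀ y : X, ∃ i : ℕ, y ∈ C (l.getD i x₀) := by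
    intro y
    obtain ⟨y₀, hy₀t, hy₀⟩ := mem_iUnion₂.1 (ht (mem_univ y))
    have : y₀ ∈ l := Finset.mem_toList.2 hy₀t
    obtain ⟨i, hi, hget⟩ := List.getElem_of_mem this
    exact ⟨i, by rwa [List.getD_eq_getElem l x₀ hi, hget]⟩
  set c : X → ℕ := fun y => sInf {i | y ∈ C (l.getD i x₀)} with hc
  have hmem : ∀ y : X, y ∈ C (l.getD (c y) x₀) := fun y => Nat.sInf_mem (hex y)
  have hmin : ∀ y : X, ∀ j < c y, y ∉ C (l.getD j x₀) :=
    fun y j hj => Nat.notMem_of_lt_sInf hj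
  refine ⟨c, ?_, ?_⟩
  · intro a
    refine ⟨C (l.getD (c a) x₀) \ ⋃ j ∈ Finset.range (c a), C (l.getD j x₀),
      ?_, ⟨hmem a, ?_⟩, ?_⟩
    · exact (hCclopen _).2.sdiff (isClosed_biUnion_finset fun j _ => (hCclopen _).1)
    · simp only [mem_iUnion]
      rintro ⟨j, hj, hjmem⟩
      exact hmin a j (Finset.mem_range.1 hj) hjmem
    · rintro z ⟨hz1, hz2⟩
      refine le_antisymm (Nat.sInf_le hz1) ?_
      by_contra hlt
      push_neg at hlt
      exact hz2 (mem_iUnion.2 ⟨c z, mem_iUnion.2 ⟨Finset.mem_range.2 hlt, hmem z⟩⟩)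
  · intro a b hab
    have ha := hCsub _ (hmem a)
    have hb := hCsub _ (hmem b)
    rw [hab] at ha
    rw [Metric.mem_ball] at ha hb
    calc dist a b ≤ dist a (l.getD (c b) x₀) + dist (l.getD (c b) x₀) b := dist_triangle _ _ _
      _ ≤ δ / 4 + δ / 4 := by
          rw [dist_comm (l.getD (c b) x₀) b]; exact add_le_add ha.le hb.le
      _ = δ / 2 := by ring


private lemma exists_adapted_small {X : Type*} [MetricSpace X] [CompactSpace X]
    [TotallyDisconnectedSpace X] [Nonempty X] {G : Type*} [Group G] (Φ : G → X ≃ₜ X)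
    (hhom : IsActionHom Φ) (hequi : IsEquicontinuousAction Φ) (x : X) {δ : ℝ} (hδ : 0 < δ) :
    ∃ U : Set X, IsAdapted Φ U ∧ x ∈ U ∧ Metric.diam U < δ := by
  obtain ⟨c, hcl, hcs⟩ := exists_locConst_small (X := X) hδ
  obtain ⟨η, hη, hcu⟩ := locConst_uniform hcl
  obtain ⟨δ', hδ', hd⟩ := hequi η hη
  set U : Set X := {y | ∀ g : G, c (Φ g y) = c (Φ g x)} with hUdef
  have hx : x ∈ U := fun _ => rfl
  have key : ∀ y z : X, dist y z < δ' → ∀ g : G, c (Φ g y) = c (Φ g z) :=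
    fun y z h g => hcu _ _ (hd g y z h)
  have hopen : IsOpen U := by
    apply Metric.isOpen_iff.2
    intro y hy
    refine ⟨δ', hδ', fun z hz g => ?_⟩
    rw [Metric.mem_ball] at hz
    exact (key z y hz g).trans (hy g)
  have hclosed : IsClosed U := by
    rw [← isOpen_compl_iff]
    apply Metric.isOpen_iff.2
    intro y hy
    refine ⟨δ', hδ', fun z hz hzU => hy fun g => ?_⟩
    rw [Metric.mem_ball] at hz
    rw [← hzU g]
    exact key y z (by rwa [dist_comm]) g
  have himg : ∀ h : G, ⇑(Φ h) '' U = {y | ∀ g : G, c (Φ g y) = c (Φ (g * h) x)} := by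
    intro h
    ext z
    constructor
    · rintro ⟨y, hyU, rfl⟩ g
      rw [← hhom.2 g h y]
      exact hyU (g * h)
    · intro hz
      refine ⟨Φ h⁻¹ z, fun g => ?_, ?_⟩
      · have h1 : Φ g (Φ h⁻¹ z) = Φ (g * h⁻¹) z := (hhom.2 g h⁻¹ z).symm
        have h2 := hz (g * h⁻¹)
        rw [h1, h2, mul_assoc, inv_mul_cancel, mul_one]
      · rw [← hhom.2 h h⁻¹ z, mul_inv_cancel]
        exact hhom.1 z
  have hadapted : IsAdapted Φ U := by
    refine ⟨⟨x, hx⟩, ⟨hclosed, hopen⟩, ?_⟩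
    rintro h ⟨w, hw1, hw2⟩
    rw [himg h] at hw1 ⊢
    have hcode : ∀ g : G, c (Φ (g * h) x) = c (Φ g x) := fun g => (hw1 g).symm.trans (hw2 g)
    ext y
    constructor
    · intro hy g
      rw [hy g, hcode g]
    · intro hy g
      rw [hy g]
      exact (hcode g).symm
  have hsub : ∀ y ∈ U, ∀ z ∈ U, dist y z ≤ δ / 2 := by
    intro y hy z hz
    apply hcs
    have h1 := hy 1
    have h2 := hz 1
    rw [show Φ (1 : G) y = y from hhom.1 y] at h1
    rw [show Φ (1 : G) z = z from hhom.1 z] at h2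
    rw [h1, h2]
  exact ⟨U, hadapted, hx,
    lt_of_le_of_lt (Metric.diam_le_of_forall_dist_le (by linarith) hsub) (by linarith)⟩

/-- A locally quasi-analytic Cantor action has Hausdorff germinal
groupoid (Winkelnkemper's criterion). -/
theorem stmt15 {X : Type*} [MetricSpace X] [CompactSpace X] [TotallyDisconnectedSpace X]
    [Nonempty X] (hX : Perfect (Set.univ : Set X))
    {G : Type*} [Group G] [Countable G] (Φ : G → X ≃ₜ X) (hΦ : IsCantorAction Φ)
    (hlqa : ∃ ε : ℝ, 0 < ε ∧ ∀ U : Set X, IsAdapted Φ U → Metric.diam U < ε →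
        ∀ V : Set X, IsAdapted Φ V → V ⊆ U → ∀ g₁ g₂ : G,
          (∀ z ∈ V, Φ g₁ z = Φ g₂ z) → ∀ z ∈ U, Φ g₁ z = Φ g₂ z) :
    ∀ (g g' : G) (x : X), Φ g x = Φ g' x →
      (∃ (xs : ℕ → X) (W : ℕ → Set X), Filter.Tendsto xs Filter.atTop (nhds x) ∧
          ∀ i : ℕ, IsOpen (W i) ∧ xs i ∈ W i ∧ ∀ z ∈ W i, Φ g z = Φ g' z) →
      ∃ O : Set X, IsOpen O ∧ x ∈ O ∧ ∀ z ∈ O, Φ g z = Φ g' z := by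
  
  intro g g' x hgx hseq
  obtain ⟨xs, W, hxs, hW⟩ := hseq
  obtain ⟨ε, hε, hlqa⟩ := hlqa
  obtain ⟨U, hUad, hxU, hUdiam⟩ := exists_adapted_small Φ hΦ.1 hΦ.2.2 x hε
  have hUopen : IsOpen U := hUad.2.1.2
  obtain ⟨i, hi⟩ := (hxs.eventually_mem (hUopen.mem_nhds hxU)).exists
  obtain ⟨hWopen, hxsW, hWagree⟩ := hW i
  have hmem : U ∩ W i ∈ nhds (xs i) :=
    Filter.inter_mem (hUopen.mem_nhds hi) (hWopen.mem_nhds hxsW)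
  obtain ⟨r, hr, hball⟩ := Metric.mem_nhds_iff.1 hmem
  obtain ⟨V, hVad, hxsV, hVdiam⟩ := exists_adapted_small Φ hΦ.1 hΦ.2.2 (xs i) hr
  have hVsub : V ⊆ U ∩ W i := by
    intro z hz
    apply hball
    rw [Metric.mem_ball]
    calc dist z (xs i) ≤ Metric.diam V :=
          Metric.dist_le_diam_of_mem Metric.isBounded_of_compactSpace hz hxsV
      _ < r := hVdiam
  exact ⟨U, hUopen, hxU, hlqa U hUad hUdiam V hVad (fun z hz => (hVsub hz).1) g g'
    (fun z hz => hWagree z (hVsub hz).2)⟩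
end

section
/- Let (X,G,Φ) be a Cantor action and suppose G(Φ) contains a non-Hausdorff element at some point x ∈ X. Then the action is wild: for every y ∈ X and every adapted neighborhood basis {U_ℓ} at y, the stabilizer chain K_ℓ := {f ∈ G(Φ) : f(z) = z for all z ∈ U_ℓ} is not eventually constant. Equivalently, the action of G(Φ) on X is not locally completely quasi-analytic. -/
open Set Topology Filter

section Stmt16Helpers

set_option linter.unusedSectionVars false
set_option linter.unusedVariables false

variable {X : Type*} [MetricSpace X] {G : Type*} [Group G]

lemma actHom_inv_apply {Φ : G → X ≃ₜ X} (hΦ : IsActionHom Φ) (g : G) (z : X) :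
    Φ g⁻¹ (Φ g z) = z := by
  have h1 := hΦ.2 g⁻¹ g z
  rw [inv_mul_cancel] at h1
  rw [← h1]
  exact hΦ.1 z

lemma actHom_apply_inv {Φ : G → X ≃ₜ X} (hΦ : IsActionHom Φ) (g : G) (z : X) :
    Φ g (Φ g⁻¹ z) = z := by
  have := actHom_inv_apply hΦ g⁻¹ z
  rwa [inv_inv] at this

lemma id_mem_actionClosure {Φ : G → X ≃ₜ X} (hΦ : IsActionHom Φ) :
    (ContinuousMap.id X) ∈ actionClosure Φ := by
  apply subset_closure
  exact ⟨1, ContinuousMap.ext fun z => hΦ.1 z⟩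

lemma conj_mem_actionClosure {Φ : G → X ≃ₜ X} (hΦ : IsActionHom Φ) (g : G)
    {f : C(X, X)} (hf : f ∈ actionClosure Φ) :
    (((Φ g : C(X, X)).comp f).comp (Φ g⁻¹ : C(X, X))) ∈ actionClosure Φ := by
  have hcont : Continuous fun u : C(X, X) =>
      (((Φ g : C(X, X)).comp u).comp (Φ g⁻¹ : C(X, X))) :=
    (ContinuousMap.continuous_precomp (Φ g⁻¹ : C(X, X))).comp
      (ContinuousMap.continuous_postcomp (Φ g : C(X, X)))
  refine map_mem_closure (f := fun u : C(X, X) =>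
      (((Φ g : C(X, X)).comp u).comp (Φ g⁻¹ : C(X, X)))) hcont hf ?_
  rintro u ⟨k, rfl⟩
  exact ⟨g * k * g⁻¹, ContinuousMap.ext fun z => by
    simp only [ContinuousMap.comp_apply, ContinuousMap.coe_coe]
    rw [hΦ.2 (g * k) g⁻¹ z, hΦ.2 g k (Φ g⁻¹ z)]⟩

/-- The itinerary class of `x` relative to a clopen set `V`. -/
def itinClass (Φ : G → X ≃ₜ X) (V : Set X) (x : X) : Set X :=
  {z | ∀ g : G, Φ g z ∈ V ↔ Φ g x ∈ V}

lemma self_mem_itinClass (Φ : G → X ≃ₜ X) (V : Set X) (x : X) :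
    x ∈ itinClass Φ V x := fun _ => Iff.rfl

lemma itinClass_subset {Φ : G → X ≃ₜ X} (hΦ : IsActionHom Φ) {V : Set X} {x : X}
    (hxV : x ∈ V) : itinClass Φ V x ⊆ V := by
  intro z hz
  have h1 := hz 1
  rw [hΦ.1 z, hΦ.1 x] at h1
  exact h1.mpr hxV

lemma isClosed_itinClass (Φ : G → X ≃ₜ X) {V : Set X} (hV : IsClopen V) (x : X) :
    IsClosed (itinClass Φ V x) := by
  have h : itinClass Φ V x = ⋂ g : G, {z : X | Φ g z ∈ V ↔ Φ g x ∈ V} := by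
    ext z; simp [itinClass]
  rw [h]
  refine isClosed_iInter fun g => ?_
  by_cases hg : Φ g x ∈ V
  · have : {z : X | Φ g z ∈ V ↔ Φ g x ∈ V} = (Φ g) ⁻¹' V := by ext z; simp [hg]
    rw [this]; exact hV.1.preimage (Φ g).continuous
  · have : {z : X | Φ g z ∈ V ↔ Φ g x ∈ V} = (Φ g) ⁻¹' Vᶜ := by ext z; simp [hg]
    rw [this]; exact (hV.2.isClosed_compl).preimage (Φ g).continuous

lemma isOpen_itinClass [CompactSpace X] {Φ : G → X ≃ₜ X}
    (hE : IsEquicontinuousAction Φ) {V : Set X} (hV : IsClopen V) (x : X) :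
    IsOpen (itinClass Φ V x) := by
  obtain ⟨ρ, hρpos, hρ⟩ : ∃ ρ > (0 : ℝ), ∀ a ∈ V, ∀ b : X, dist b a < ρ → b ∈ V := by
    obtain ⟨δ, hδpos, hδ⟩ :=
      (hV.1.isCompact).exists_thickening_subset_open hV.2 subset_rfl
    exact ⟨δ, hδpos, fun a ha b hb => hδ (Metric.mem_thickening_iff.2 ⟨a, ha, hb⟩)⟩
  obtain ⟨δ, hδpos, hδ⟩ := hE ρ hρpos
  rw [Metric.isOpen_iff]
  intro z hz
  refine ⟨δ, hδpos, fun w hw => fun g => ?_⟩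
  have h1 : dist (Φ g w) (Φ g z) < ρ := hδ g w z (Metric.mem_ball.1 hw)
  constructor
  · intro h
    refine (hz g).1 (hρ _ h _ ?_)
    rw [dist_comm] at h1; exact h1
  · intro h
    exact hρ _ ((hz g).2 h) _ h1

lemma itinClass_adapted [CompactSpace X] {Φ : G → X ≃ₜ X} (hΦ : IsActionHom Φ)
    (hE : IsEquicontinuousAction Φ) {V : Set X} (hV : IsClopen V) {x : X} (hxV : x ∈ V) :
    IsAdapted Φ (itinClass Φ V x) := by
  refine ⟨⟨x, self_mem_itinClass Φ V x⟩,
    ⟨isClosed_itinClass Φ hV x, isOpen_itinClass hE hV x⟩, ?_⟩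
  rintro h ⟨w', ⟨w, hwU, hw'eq⟩, hw'U⟩
  have star : ∀ k : G, Φ (k * h) x ∈ V ↔ Φ k x ∈ V := by
    intro k
    have h1 := hwU (k * h)
    have h2 := hw'U k
    rw [← hw'eq] at h2
    rw [← hΦ.2 k h w] at h2
    exact h1.symm.trans h2
  apply Set.Subset.antisymm
  · rintro _ ⟨u, huU, rfl⟩
    intro g
    rw [← hΦ.2 g h u]
    exact (huU (g * h)).trans (star g)
  · intro u huU
    refine ⟨Φ h⁻¹ u, fun g => ?_, actHom_apply_inv hΦ h u⟩
    rw [← hΦ.2 g h⁻¹ u]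
    refine (huU (g * h⁻¹)).trans ?_
    have := star (g * h⁻¹)
    rw [inv_mul_cancel_right] at this
    exact this.symm

lemma exists_chain_subset_open [CompactSpace X] {U : ℕ → Set X} (hanti : Antitone U)
    (hcl : ∀ ℓ, IsClosed (U ℓ)) {y : X} (hI : (⋂ ℓ, U ℓ) = ({y} : Set X))
    {O : Set X} (hO : IsOpen O) (hyO : y ∈ O) : ∃ ℓ, U ℓ ⊆ O := by
  by_contra hcon
  push_neg at hcon
  have hne : ∀ ℓ, (U ℓ ∩ Oᶜ).Nonempty := fun ℓ => by
    obtain ⟨z, hz, hzO⟩ := Set.not_subset.1 (hcon ℓ)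
    exact ⟨z, hz, hzO⟩
  obtain ⟨z, hz⟩ := IsCompact.nonempty_iInter_of_directed_nonempty_isCompact_isClosed
    (fun ℓ => U ℓ ∩ Oᶜ)
    (fun a b => ⟨max a b,
      Set.inter_subset_inter_left _ (hanti (le_max_left a b)),
      Set.inter_subset_inter_left _ (hanti (le_max_right a b))⟩)
    hne
    (fun ℓ => ((hcl ℓ).inter hO.isClosed_compl).isCompact)
    (fun ℓ => (hcl ℓ).inter hO.isClosed_compl)
  simp only [Set.mem_iInter, Set.mem_inter_iff] at hz
  have hzy : z ∈ (⋂ ℓ, U ℓ) := Set.mem_iInter.2 fun ℓ => (hz ℓ).1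
  rw [hI, Set.mem_singleton_iff] at hzy
  exact (hz 0).2 (hzy ▸ hyO)

end Stmt16Helpers

/-- If the Ellis group contains a non-Hausdorff element then the action
is wild, equivalently not locally completely quasi-analytic. -/
theorem stmt16 {X : Type*} [MetricSpace X] [CompactSpace X] [TotallyDisconnectedSpace X]
    [Nonempty X] (hX : Perfect (Set.univ : Set X))
    {G : Type*} [Group G] [Countable G] (Φ : G → X ≃ₜ X) (hΦ : IsCantorAction Φ)
    (hnh : ∃ (f : C(X, X)) (x : X), IsNonHausdorffElem Φ f x) :
    (∀ (y : X) (U : ℕ → Set X), IsAdaptedBasis Φ y U → ¬ IsStableChain Φ U) ∧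
      ¬ IsLCQA Φ := by
  obtain ⟨f, x, hfc, hfx, hfne, xs, W, hxs, hW⟩ := hnh
  obtain ⟨hhom, hmin, hequi⟩ := hΦ
  constructor
  · -- Part 1: every stabilizer chain is unstable.
    rintro y U hb ⟨ℓ₀, hstab⟩
    obtain ⟨hU0, hAd, hyU, hssub, hInter⟩ := hb
    have hanti : Antitone U := antitone_nat_of_succ_le fun n => (hssub n).subset
    obtain ⟨ρ₀, hρ₀pos, hρ₀⟩ := Metric.isOpen_iff.1 (hAd ℓ₀).2.1.2 y (hyU ℓ₀)
    obtain ⟨δ₁, hδ₁pos, hδ₁⟩ := hequi (ρ₀ / 4) (by positivity)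
    obtain ⟨i, hi⟩ := (hxs.eventually (Metric.ball_mem_nhds x hδ₁pos)).exists
    obtain ⟨hxiW, hWclopen, hWinv, hWfix⟩ := hW i
    obtain ⟨r, hrpos, hr⟩ := Metric.isOpen_iff.1 hWclopen.2 (xs i) hxiW
    obtain ⟨δ₂, hδ₂pos, hδ₂⟩ := hequi r hrpos
    have hηpos : (0 : ℝ) < min (ρ₀ / 4) (δ₂ / 2) := lt_min (by positivity) (by positivity)
    obtain ⟨p, hpmem, hpball⟩ := (hmin (xs i)).exists_mem_open Metric.isOpen_ball
      ⟨y, Metric.mem_ball_self hηpos⟩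
    obtain ⟨g, rfl⟩ := hpmem
    rw [Metric.mem_ball] at hpball
    obtain ⟨ℓ₁, hℓ₁⟩ := exists_chain_subset_open hanti (fun ℓ => (hAd ℓ).2.1.1) hInter
      (Metric.isOpen_ball (x := y) (ε := δ₂ / 2)) (Metric.mem_ball_self (by positivity))
    obtain ⟨Wb, hWbcl, hxWb, hWbsub⟩ := compact_exists_isClopen_in_isOpen
      (Metric.isOpen_ball (x := x) (ε := δ₁)) (Metric.mem_ball_self hδ₁pos)
    have hbad := hfne Wb hWbcl hxWb
    push_neg at hbad
    obtain ⟨z, hzWb, hfz⟩ := hbad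
    set h : C(X, X) := ((Φ g : C(X, X)).comp f).comp (Φ g⁻¹ : C(X, X)) with hhdef
    have hhcl : h ∈ actionClosure Φ := conj_mem_actionClosure hhom g hfc
    have happly : ∀ w : X, h w = Φ g (f (Φ g⁻¹ w)) := fun w => rfl
    have hfixm : ∀ w ∈ U (max ℓ₁ ℓ₀), h w = w := by
      intro w hw
      have hw1 : w ∈ U ℓ₁ := hanti (le_max_left _ _) hw
      have hball : dist w (Φ g (xs i)) < δ₂ := by
        have h1 : dist w y < δ₂ / 2 := Metric.mem_ball.1 (hℓ₁ hw1)
        have h2 : dist (Φ g (xs i)) y < δ₂ / 2 :=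
          lt_of_lt_of_le hpball (min_le_right _ _)
        calc dist w (Φ g (xs i)) ≤ dist w y + dist y (Φ g (xs i)) := dist_triangle _ _ _
          _ < δ₂ / 2 + δ₂ / 2 := by rw [dist_comm y]; exact add_lt_add h1 h2
          _ = δ₂ := by ring
      have hmem : Φ g⁻¹ w ∈ W i := by
        apply hr
        have hd := hδ₂ g⁻¹ w (Φ g (xs i)) hball
        rw [actHom_inv_apply hhom g (xs i)] at hd
        exact Metric.mem_ball.2 hd
      rw [happly w, hWfix _ hmem, actHom_apply_inv hhom g w]
    have hmemK : h ∈ stabChain Φ U (max ℓ₁ ℓ₀) := ⟨hhcl, hfixm⟩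
    rw [hstab (max ℓ₁ ℓ₀) (le_max_right _ _)] at hmemK
    have hz0 : Φ g z ∈ U ℓ₀ := by
      apply hρ₀
      rw [Metric.mem_ball]
      have d1 : dist (Φ g z) (Φ g x) < ρ₀ / 4 :=
        hδ₁ g z x (Metric.mem_ball.1 (hWbsub hzWb))
      have d2 : dist (Φ g x) (Φ g (xs i)) < ρ₀ / 4 := by
        apply hδ₁ g x (xs i)
        rw [dist_comm]
        exact Metric.mem_ball.1 hi
      have d3 : dist (Φ g (xs i)) y < ρ₀ / 4 :=
        lt_of_lt_of_le hpball (min_le_left _ _)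
      calc dist (Φ g z) y ≤ dist (Φ g z) (Φ g x) + dist (Φ g x) (Φ g (xs i))
            + dist (Φ g (xs i)) y := dist_triangle4 _ _ _ _
        _ < ρ₀ / 4 + ρ₀ / 4 + ρ₀ / 4 := by
            exact add_lt_add (add_lt_add d1 d2) d3
        _ < ρ₀ := by linarith
    have hzz := hmemK.2 (Φ g z) hz0
    rw [happly (Φ g z), actHom_inv_apply hhom g z] at hzz
    exact hfz ((Φ g).injective hzz)
  · -- Part 2: not LCQA.
    rintro ⟨ε, hεpos, hlcqa⟩
    obtain ⟨V, hV, hxV, hVsub⟩ := compact_exists_isClopen_in_isOpen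
      (Metric.isOpen_ball (x := x) (ε := ε / 3)) (Metric.mem_ball_self (by positivity))
    have hUad : IsAdapted Φ (itinClass Φ V x) := itinClass_adapted hhom hequi hV hxV
    have hUsub : itinClass Φ V x ⊆ V := itinClass_subset hhom hxV
    have hdiam : Metric.diam (itinClass Φ V x) < ε := by
      calc Metric.diam (itinClass Φ V x) ≤ Metric.diam (Metric.ball x (ε / 3)) :=
            Metric.diam_mono (hUsub.trans hVsub) Metric.isBounded_ball
        _ ≤ 2 * (ε / 3) := Metric.diam_ball (by positivity)
        _ < ε := by linarith
    obtain ⟨i, hiU⟩ := (hxs.eventually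
      (hUad.2.1.2.mem_nhds (self_mem_itinClass Φ V x))).exists
    obtain ⟨hxiW, hWcl, hWinv, hWfix⟩ := hW i
    have hV₂cl : IsClopen (W i ∩ itinClass Φ V x) := hWcl.inter hUad.2.1
    have hxiV₂ : xs i ∈ W i ∩ itinClass Φ V x := ⟨hxiW, hiU⟩
    have hVsad : IsAdapted Φ (itinClass Φ (W i ∩ itinClass Φ V x) (xs i)) :=
      itinClass_adapted hhom hequi hV₂cl hxiV₂
    have hVssub : itinClass Φ (W i ∩ itinClass Φ V x) (xs i) ⊆ W i ∩ itinClass Φ V x :=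
      itinClass_subset hhom hxiV₂
    have hagree : ∀ z ∈ itinClass Φ (W i ∩ itinClass Φ V x) (xs i),
        f z = (ContinuousMap.id X) z := fun z hz => hWfix z (hVssub hz).1
    have hfinal := hlcqa (itinClass Φ V x) hUad hdiam
      (itinClass Φ (W i ∩ itinClass Φ V x) (xs i)) hVsad (fun z hz => (hVssub hz).2)
      f hfc (ContinuousMap.id X) (id_mem_actionClosure hhom) hagree
    exact hfne (itinClass Φ V x) hUad.2.1 (self_mem_itinClass Φ V x)
      (fun z hz => hfinal z hz)
end

section
/- Let (X,G,Φ) be a Cantor action and let f ∈ G(Φ) be a non-Hausdorff element at x ∈ X. Then f has infinitely many conjugates in the isotropy group of x: the set of maps h ∈ C(X,X) such that h(x) = x and h = k' ∘ f ∘ k for some k, k' ∈ G(Φ) with k ∘ k' = k' ∘ k = id_X, is infinite. (Consequently, if every element of the isotropy group of the closure at x has only finitely many of its G(Φ)-conjugates lying in that isotropy group, then no element of G(Φ) is non-Hausdorff at x.) -/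
open Set Topology Filter

/-- Key step: given a clopen neighborhood `V` of `x`, we can find a conjugate of `f` in
the isotropy group of `x` which is the identity on some clopen neighborhood of `x` but
not the identity on `V`. -/
lemma stmt19_step {X : Type*} [MetricSpace X] {G : Type*} [Group G]
    (Φ : G → X ≃ₜ X) (hΦ : IsCantorAction Φ) (f : C(X, X)) (x : X)
    (hf : IsNonHausdorffElem Φ f x) (V : Set X) (hV : IsClopen V) (hxV : x ∈ V) :
    ∃ h : C(X, X), (h x = x ∧ ∃ k ∈ actionClosure Φ, ∃ k' ∈ actionClosure Φ,
        k.comp k' = ContinuousMap.id X ∧ k'.comp k = ContinuousMap.id X ∧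
        h = (k'.comp f).comp k) ∧
      (∃ V' : Set X, IsClopen V' ∧ x ∈ V' ∧ ∀ z ∈ V', h z = z) ∧
      ∃ z ∈ V, h z ≠ z := by
  obtain ⟨⟨hone, hmul⟩, hmin, hequi⟩ := hΦ
  obtain ⟨hfc, hfx, hnotid, xs, W, htend, hWprop⟩ := hf
  obtain ⟨ε, hε, hball⟩ := Metric.isOpen_iff.mp hV.isOpen x hxV
  obtain ⟨δ, hδ, hδprop⟩ := hequi ε hε
  obtain ⟨N, hN⟩ := Metric.tendsto_atTop.mp htend δ hδ
  have hxsN : dist (xs N) x < δ := hN N le_rfl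
  obtain ⟨xi_mem, hWclopen, hWimg, hWfix⟩ := hWprop N
  have hOopen : IsOpen (W N ∩ Metric.ball x δ) := hWclopen.isOpen.inter Metric.isOpen_ball
  have hOne : (W N ∩ Metric.ball x δ).Nonempty := ⟨xs N, xi_mem, hxsN⟩
  obtain ⟨z0, hz0r, hz0O⟩ := (hmin x).exists_mem_open hOopen hOne
  obtain ⟨g, hg⟩ := hz0r
  simp only at hg
  rw [← hg] at hz0O
  -- basic cancellation facts
  have hcancel : ∀ z : X, Φ g⁻¹ (Φ g z) = z := by
    intro z
    have := hmul g⁻¹ g z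
    rw [inv_mul_cancel, hone] at this
    exact this.symm
  have hcancel' : ∀ z : X, Φ g (Φ g⁻¹ z) = z := by
    intro z
    have := hmul g g⁻¹ z
    rw [mul_inv_cancel, hone] at this
    exact this.symm
  set k : C(X, X) := (Φ g : C(X, X)) with hk
  set k' : C(X, X) := (Φ g⁻¹ : C(X, X)) with hk'
  set h : C(X, X) := (k'.comp f).comp k with hh
  have happly : ∀ z : X, h z = Φ g⁻¹ (f (Φ g z)) := fun z => rfl
  refine ⟨h, ⟨?_, k, ?_, k', ?_, ?_, ?_, rfl⟩, ?_, ?_⟩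
  · rw [happly, hWfix _ hz0O.1, hcancel]
  · exact subset_closure ⟨g, rfl⟩
  · exact subset_closure ⟨g⁻¹, rfl⟩
  · exact ContinuousMap.ext fun z => hcancel' z
  · exact ContinuousMap.ext fun z => hcancel z
  · refine ⟨⇑(Φ g) ⁻¹' (W N), hWclopen.preimage (Φ g).continuous, hz0O.1, ?_⟩
    intro z hz
    rw [happly, hWfix _ hz, hcancel]
  · -- h is not the identity on V
    have hginvx : Φ g⁻¹ x ∈ V := by
      apply hball
      have := hδprop g⁻¹ (Φ g x) x (Metric.mem_ball.mp hz0O.2)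
      rw [hcancel] at this
      rw [Metric.mem_ball, dist_comm]
      exact this
    have hUclopen : IsClopen (⇑(Φ g⁻¹) ⁻¹' V) := hV.preimage (Φ g⁻¹).continuous
    have hxU : x ∈ ⇑(Φ g⁻¹) ⁻¹' V := hginvx
    have := hnotid _ hUclopen hxU
    push_neg at this
    obtain ⟨y, hyU, hy⟩ := this
    refine ⟨Φ g⁻¹ y, hyU, ?_⟩
    intro heq
    rw [happly, hcancel'] at heq
    exact hy ((Φ g⁻¹).injective heq)

/-- A non-Hausdorff element at `x` has infinitely many conjugates under
the Ellis group lying in the isotropy group of `x`. -/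
theorem stmt19 {X : Type*} [MetricSpace X] [CompactSpace X] [TotallyDisconnectedSpace X]
    [Nonempty X] (hX : Perfect (Set.univ : Set X))
    {G : Type*} [Group G] [Countable G] (Φ : G → X ≃ₜ X) (hΦ : IsCantorAction Φ)
    (f : C(X, X)) (x : X) (hf : IsNonHausdorffElem Φ f x) :
    {h : C(X, X) | h x = x ∧ ∃ k ∈ actionClosure Φ, ∃ k' ∈ actionClosure Φ,
        k.comp k' = ContinuousMap.id X ∧ k'.comp k = ContinuousMap.id X ∧
        h = (k'.comp f).comp k}.Infinite := by
  set S := {h : C(X, X) | h x = x ∧ ∃ k ∈ actionClosure Φ, ∃ k' ∈ actionClosure Φ,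
      k.comp k' = ContinuousMap.id X ∧ k'.comp k = ContinuousMap.id X ∧
      h = (k'.comp f).comp k} with hSdef
  by_contra hinf
  rw [Set.not_infinite] at hinf
  set T := {h : C(X, X) | h ∈ S ∧ ∃ V : Set X, IsClopen V ∧ x ∈ V ∧ ∀ z ∈ V, h z = z}
    with hTdef
  have hT : T.Finite := hinf.subset fun h hh => hh.1
  have hTex : ∀ h : C(X, X), h ∈ T → ∃ V : Set X, IsClopen V ∧ x ∈ V ∧ ∀ z ∈ V, h z = z :=
    fun h hh => hh.2
  choose! Vf hc1 hc2 hc3 using hTex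
  set Wall : Set X := ⋂ h ∈ hT.toFinset, Vf h with hWall
  have hWallclopen : IsClopen Wall := by
    apply isClopen_biInter_finset
    intro h hh
    exact hc1 h (hT.mem_toFinset.mp hh)
  have hxWall : x ∈ Wall := by
    rw [hWall, Set.mem_iInter₂]
    intro h hh
    exact hc2 h (hT.mem_toFinset.mp hh)
  obtain ⟨h, hhS, ⟨V', hV'c, hxV', hid⟩, z, hzW, hne⟩ :=
    stmt19_step Φ hΦ f x hf Wall hWallclopen hxWall
  have hhT : h ∈ T := ⟨hhS, V', hV'c, hxV', hid⟩
  have hzV : z ∈ Vf h := by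
    rw [hWall, Set.mem_iInter₂] at hzW
    exact hzW h (hT.mem_toFinset.mpr hhT)
  exact hne (hc3 h hhT z hzV)
end
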